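/- arXiv:1201.0805 — 8 statements merged into one kernel-verified Lean document; each statement's English description precedes it below -/
import Mathlib

section
/- If a finitely complete category C is diexact and has a strict initial object, then C is (finitary) extensive: it has finite coproducts, and these coproducts are disjoint and stable under pullback. -/
open CategoryTheory CategoryTheory.Limits

universe v u

section Defs

variable {C : Type u} [Category.{v} C]

/-- A span `(f, g)` is *jointly monic* if `u ≫ f = v ≫ f` and `u ≫ g = v ≫ g` imply `u = v`
(equivalently, the induced map into the product is a monomorphism). -/
def JointlyMonic {Z A B : C} (f : Z ⟶ A) (g : Z ⟶ B) : Prop :=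
  ∀ ⦃X : C⦄ (u v : X ⟶ Z), u ≫ f = v ≫ f → u ≫ g = v ≫ g → u = v

/-- `(P, π₁, π₂, π₃)` is the limit `C ×_B C ×_A C` of triples `(c₁, c₂, c₃)` of generalized
elements of `Z` with `g ∘ π₁ = g ∘ π₂` and `f ∘ π₂ = f ∘ π₃`. -/
structure IsTripleLimit {Z A B : C} (f : Z ⟶ A) (g : Z ⟶ B) {P : C}
    (π₁ π₂ π₃ : P ⟶ Z) : Prop where
  w₁ : π₁ ≫ g = π₂ ≫ g
  w₂ : π₂ ≫ f = π₃ ≫ f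
  lift : ∀ ⦃X : C⦄ (x₁ x₂ x₃ : X ⟶ Z), x₁ ≫ g = x₂ ≫ g → x₂ ≫ f = x₃ ≫ f →
    ∃! u : X ⟶ P, u ≫ π₁ = x₁ ∧ u ≫ π₂ = x₂ ∧ u ≫ π₃ = x₃

/-- A jointly monic span `(f, g)` is a *Mal'cev span* if, for the limit
`P = C ×_B C ×_A C`, there exists `p : P ⟶ C` with `f ∘ p = f ∘ π₁` and `g ∘ p = g ∘ π₃`. -/
def IsMalcevSpan {Z A B : C} (f : Z ⟶ A) (g : Z ⟶ B) : Prop :=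
  JointlyMonic f g ∧
  ∀ ⦃P : C⦄ (π₁ π₂ π₃ : P ⟶ Z), IsTripleLimit f g π₁ π₂ π₃ →
    ∃ p : P ⟶ Z, p ≫ f = π₁ ≫ f ∧ p ≫ g = π₃ ≫ g

/-- A commuting square (with legs `f, g` and colegs `h, k`) is *stable under pullback* if
every commutative cube over it whose four side faces are pullbacks has a pushout top face. -/
def PushoutStable {Z A B D : C} (f : Z ⟶ A) (g : Z ⟶ B) (h : A ⟶ D) (k : B ⟶ D) : Prop :=
  ∀ ⦃Z' A' B' D' : C⦄ (f' : Z' ⟶ A') (g' : Z' ⟶ B') (h' : A' ⟶ D') (k' : B' ⟶ D')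
    (αZ : Z' ⟶ Z) (αA : A' ⟶ A) (αB : B' ⟶ B) (αD : D' ⟶ D),
    IsPullback f' αZ αA f → IsPullback g' αZ αB g →
    IsPullback h' αA αD h → IsPullback k' αB αD k →
    f' ≫ h' = g' ≫ k' → IsPushout f' g' h' k'

/-- A category is *diexact* if every Mal'cev span admits a pushout, and every pushout square
of a Mal'cev span is stable under pullback and is itself a pullback square. -/
def Diexact (C : Type u) [Category.{v} C] : Prop :=
  ∀ ⦃Z A B : C⦄ (f : Z ⟶ A) (g : Z ⟶ B), IsMalcevSpan f g →
    (∃ (D : C) (h : A ⟶ D) (k : B ⟶ D), IsPushout f g h k) ∧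
    ∀ ⦃D : C⦄ (h : A ⟶ D) (k : B ⟶ D), IsPushout f g h k →
      PushoutStable f g h k ∧ IsPullback f g h k

/-- An internal equivalence relation: a jointly monic pair which is reflexive, symmetric
and transitive. -/
def IsEquivRelation [HasPullbacks C] {E A : C} (s t : E ⟶ A) : Prop :=
  JointlyMonic s t ∧
  (∃ r : A ⟶ E, r ≫ s = 𝟙 A ∧ r ≫ t = 𝟙 A) ∧
  (∃ σ : E ⟶ E, σ ≫ s = t ∧ σ ≫ t = s) ∧
  (∃ τ : pullback t s ⟶ E,
     τ ≫ s = pullback.fst t s ≫ s ∧ τ ≫ t = pullback.snd t s ≫ t)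

/-- A finitely complete category is *Barr-exact* if every kernel pair has a coequaliser,
regular epimorphisms are stable under pullback, and every internal equivalence relation is
effective (i.e. a kernel pair). -/
def BarrExact (C : Type u) [Category.{v} C] [HasFiniteLimits C] : Prop :=
  (∀ ⦃X Y : C⦄ (f : X ⟶ Y), HasCoequalizer (pullback.fst f f) (pullback.snd f f)) ∧
  (∀ ⦃X Y W : C⦄ (f : X ⟶ Y) (g : W ⟶ Y),
     Nonempty (RegularEpi f) → Nonempty (RegularEpi (pullback.snd f g))) ∧
  (∀ ⦃E A : C⦄ (s t : E ⟶ A), IsEquivRelation s t →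
     ∃ (Q : C) (q : A ⟶ Q), IsPullback s t q q)

/-- A category is *amalgamable* if every span of monomorphisms admits a pushout which is
stable under pullback and is itself a pullback square. -/
def Amalgamable (C : Type u) [Category.{v} C] : Prop :=
  ∀ ⦃Z A B : C⦄ (f : Z ⟶ A) (g : Z ⟶ B), Mono f → Mono g →
    ∃ (D : C) (h : A ⟶ D) (k : B ⟶ D),
      IsPushout f g h k ∧ PushoutStable f g h k ∧ IsPullback f g h k

/-- A category is *adhesive* if it admits pushouts along monomorphisms, and these pushouts
are stable under pullback and are pullback squares. -/
def AdhesiveCat (C : Type u) [Category.{v} C] : Prop :=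
  ∀ ⦃Z A B : C⦄ (f : Z ⟶ A) (g : Z ⟶ B), Mono f →
    (∃ (D : C) (h : A ⟶ D) (k : B ⟶ D), IsPushout f g h k) ∧
    ∀ ⦃D : C⦄ (h : A ⟶ D) (k : B ⟶ D), IsPushout f g h k →
      PushoutStable f g h k ∧ IsPullback f g h k

/-- `u` factors through `v` (as morphisms into a common object `X`). -/
def FactorsThru {U V X : C} (u : U ⟶ X) (v : V ⟶ X) : Prop :=
  ∃ w : U ⟶ V, w ≫ v = u

/-- A monomorphism `m : P ⟶ X` is the *union* of the subobjects `a : A ⟶ X` and `b : B ⟶ X`: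
both factor through `m`, and `m` factors through any monomorphism through which both factor. -/
def IsUnionOf {A B P X : C} (a : A ⟶ X) (b : B ⟶ X) (m : P ⟶ X) : Prop :=
  Mono m ∧ FactorsThru a m ∧ FactorsThru b m ∧
  ∀ ⦃Q : C⦄ (c : Q ⟶ X), Mono c → FactorsThru a c → FactorsThru b c → FactorsThru m c

end Defs
section Aux

variable {C : Type u} [Category.{v} C]

section Init
variable [HasInitial C] [HasStrictInitialObjects C]

/-- Any object admitting a map to the initial object is initial. -/
noncomputable def isInitialOfTo {T : C} (f : T ⟶ ⊥_ C) : IsInitial T :=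
  IsInitial.ofIso initialIsInitial (asIso f).symm

lemma pb_init {A' A : C} (αA : A' ⟶ A) :
    IsPullback (initial.to A') (initial.to (⊥_ C)) αA (initial.to A) := by
  refine IsPullback.of_isLimit (PullbackCone.IsLimit.mk (initial.hom_ext _ _)
    (fun s => (isInitialOfTo s.snd).to _) (fun s => (isInitialOfTo s.snd).hom_ext _ _)
    (fun s => (isInitialOfTo s.snd).hom_ext _ _)
    (fun s m _ _ => (isInitialOfTo s.snd).hom_ext _ _))

lemma malcevInit (X Y : C) : IsMalcevSpan (initial.to X) (initial.to Y) := by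
  constructor
  · intro T u v _ _
    exact (isInitialOfTo u).hom_ext u v
  · intro P π₁ π₂ π₃ _
    exact ⟨π₁, rfl, (isInitialOfTo π₁).hom_ext _ _⟩

/-- A pushout square over the initial object gives a binary coproduct. -/
noncomputable def cofanColimitOfIsPushout {X Y D : C} {h : X ⟶ D} {k : Y ⟶ D}
    (H : IsPushout (initial.to X) (initial.to Y) h k) :
    IsColimit (BinaryCofan.mk h k) :=
  BinaryCofan.isColimitMk
    (fun s => H.desc s.inl s.inr (initial.hom_ext _ _))
    (fun s => H.inl_desc _ _ _) (fun s => H.inr_desc _ _ _)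
    (fun s m h1 h2 => H.hom_ext
      (by rw [H.inl_desc s.inl s.inr (initial.hom_ext _ _), h1])
      (by rw [H.inr_desc s.inl s.inr (initial.hom_ext _ _), h2]))

/-- Conversely, a binary coproduct is a pushout over the initial object. -/
lemma isPushoutOfCofanColimit {X Y : C} {c : BinaryCofan X Y} (hc : IsColimit c) :
    IsPushout (initial.to X) (initial.to Y) c.inl c.inr := by
  apply IsPushout.of_isColimit' ⟨initial.hom_ext _ _⟩
  exact PushoutCocone.IsColimit.mk _ (fun s => hc.desc (BinaryCofan.mk s.inl s.inr))
    (fun s => hc.fac _ ⟨WalkingPair.left⟩) (fun s => hc.fac _ ⟨WalkingPair.right⟩)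
    (fun s m h1 h2 => hc.uniq (BinaryCofan.mk s.inl s.inr) m (by rintro ⟨⟨⟩⟩ <;> assumption))

variable [HasFiniteLimits C]

lemma pushoutData (hC : Diexact C) {X Y : C} {c : BinaryCofan X Y} (hc : IsColimit c) :
    PushoutStable (initial.to X) (initial.to Y) c.inl c.inr ∧
      IsPullback (initial.to X) (initial.to Y) c.inl c.inr :=
  (hC _ _ (malcevInit X Y)).2 _ _ (isPushoutOfCofanColimit hc)

lemma mono_inl_aux (hC : Diexact C) {X Y : C} {c : BinaryCofan X Y} (hc : IsColimit c) :
    Mono c.inl := by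
  obtain ⟨stab, disj⟩ := pushoutData hC hc
  have hKP : IsPullback (pullback.fst c.inl c.inl) (pullback.snd c.inl c.inl) c.inl c.inl :=
    IsPullback.of_hasPullback _ _
  have cube : IsPushout (initial.to (pullback c.inl c.inl)) (initial.to (⊥_ C))
      (pullback.fst c.inl c.inl) (initial.to X) :=
    stab (initial.to _) (initial.to _) (pullback.fst c.inl c.inl) (initial.to X)
      (initial.to _) (pullback.snd c.inl c.inl) (initial.to Y) c.inl
      (pb_init _) (pb_init _) hKP disj (initial.hom_ext _ _)
  have hcolim : IsColimit (BinaryCofan.mk (initial.to X) (pullback.fst c.inl c.inl)) :=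
    cofanColimitOfIsPushout cube.flip
  have : IsIso (pullback.fst c.inl c.inl) :=
    (BinaryCofan.isColimit_iff_isIso_inr initialIsInitial _).mp ⟨hcolim⟩
  have hδ : pullback.lift (𝟙 X) (𝟙 X) rfl ≫ pullback.fst c.inl c.inl = 𝟙 X :=
    pullback.lift_fst _ _ _
  have hsnd : pullback.snd c.inl c.inl = pullback.fst c.inl c.inl := by
    have h1 : pullback.fst c.inl c.inl ≫ pullback.lift (𝟙 X) (𝟙 X) rfl = 𝟙 _ := by
      erw [← cancel_mono (pullback.fst c.inl c.inl), Category.assoc, hδ]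
      simp
    calc pullback.snd c.inl c.inl
        = (pullback.fst c.inl c.inl ≫ pullback.lift (𝟙 X) (𝟙 X) rfl) ≫ pullback.snd c.inl c.inl :=
          by erw [h1, Category.id_comp]
      _ = pullback.fst c.inl c.inl ≫ 𝟙 _ := by erw [Category.assoc, pullback.lift_snd]; rfl
      _ = pullback.fst c.inl c.inl := Category.comp_id _
  constructor
  intro T a b hab
  have h3 := pullback.lift_fst a b hab
  have h2 := pullback.lift_snd a b hab
  rw [hsnd] at h2
  exact h3.symm.trans h2

lemma mono_inr_aux (hC : Diexact C) {X Y : C} {c : BinaryCofan X Y} (hc : IsColimit c) :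
    Mono c.inr :=
  mono_inl_aux hC (BinaryCofan.isColimitFlip hc)

lemma isPullback_side (hC : Diexact C) {X Y X' Y' : C} {c : BinaryCofan X Y} (hc : IsColimit c)
    {c' : BinaryCofan X' Y'} (hc' : IsColimit c') (αX : X' ⟶ X) (αY : Y' ⟶ Y)
    (f : c'.pt ⟶ c.pt) (hX : αX ≫ c.inl = c'.inl ≫ f) (hY : αY ≫ c.inr = c'.inr ≫ f) :
    IsPullback c'.inl αX f c.inl := by
  obtain ⟨stab, disj⟩ := pushoutData hC hc
  obtain ⟨stab', _⟩ := pushoutData hC hc'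
  have monoCinl : Mono c.inl := mono_inl_aux hC hc
  have monoC'inl : Mono c'.inl := mono_inl_aux hC hc'
  have hX' : c'.inl ≫ f = αX ≫ c.inl := hX.symm
  -- the comparison map to the pullback
  set a : pullback f c.inl ⟶ c'.pt := pullback.fst f c.inl with ha
  set b : pullback f c.inl ⟶ X := pullback.snd f c.inl with hb
  have hcond : a ≫ f = b ≫ c.inl := pullback.condition
  -- pull back the coproduct c' along a
  have cube : IsPushout (initial.to (pullback a c'.inl)) (initial.to (pullback a c'.inr))
      (pullback.fst a c'.inl) (pullback.fst a c'.inr) :=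
    stab' (initial.to _) (initial.to _) (pullback.fst a c'.inl) (pullback.fst a c'.inr)
      (initial.to _) (pullback.snd a c'.inl) (pullback.snd a c'.inr) a
      (pb_init _) (pb_init _) (IsPullback.of_hasPullback a c'.inl)
      (IsPullback.of_hasPullback a c'.inr) (initial.hom_ext _ _)
  -- the second summand is initial
  have w2 : (pullback.fst a c'.inr ≫ b) ≫ c.inl =
      (pullback.snd a c'.inr ≫ αY) ≫ c.inr := by
    erw [Category.assoc, ← hcond, Category.assoc, hY, ← Category.assoc, pullback.condition,
      Category.assoc]
  have hT2 : IsInitial (pullback a c'.inr) :=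
    isInitialOfTo (disj.lift (pullback.fst a c'.inr ≫ b) (pullback.snd a c'.inr ≫ αY) w2)
  have : IsIso (pullback.fst a c'.inl) :=
    (BinaryCofan.isColimit_iff_isIso_inl hT2 _).mp ⟨cofanColimitOfIsPushout cube⟩
  -- the inverse comparison
  set l : pullback f c.inl ⟶ X' := inv (pullback.fst a c'.inl) ≫ pullback.snd a c'.inl with hl
  have hl1 : l ≫ c'.inl = a := by
    erw [hl, Category.assoc, ← pullback.condition, ← Category.assoc, IsIso.inv_hom_id,
      Category.id_comp]
  have hl2 : l ≫ αX = b := by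
    erw [← cancel_mono c.inl, Category.assoc, ← hX', ← Category.assoc, hl1, hcond]; rfl
  set u : X' ⟶ pullback f c.inl := pullback.lift c'.inl αX hX' with hu
  have hu1 : u ≫ a = c'.inl := pullback.lift_fst _ _ _
  have hu2 : u ≫ b = αX := pullback.lift_snd _ _ _
  have : IsIso u := by
    refine ⟨l, ?_, ?_⟩
    · erw [← cancel_mono c'.inl, Category.assoc, hl1, hu1, Category.id_comp]
    · apply pullback.hom_ext
      · erw [Category.assoc, ← ha, hu1, hl1, Category.id_comp]
      · erw [Category.assoc, ← hb, hu2, hl2, Category.id_comp]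
  exact IsPullback.of_iso_pullback ⟨hX'⟩ (@asIso _ _ _ _ u this) hu1 hu2

lemma vanKampen_aux (hC : Diexact C) {X Y : C} (c : BinaryCofan X Y) (hc : IsColimit c) :
    IsVanKampenColimit c := by
  rw [BinaryCofan.isVanKampen_iff]
  intro X' Y' c' αX αY f hX hY
  obtain ⟨stab, _⟩ := pushoutData hC hc
  constructor
  · rintro ⟨hc'⟩
    refine ⟨isPullback_side hC hc hc' αX αY f hX hY, ?_⟩
    have := isPullback_side hC (BinaryCofan.isColimitFlip hc) (BinaryCofan.isColimitFlip hc')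
      αY αX f hY hX
    exact this
  · rintro ⟨h₁, h₂⟩
    refine ⟨IsColimit.ofIsoColimit (cofanColimitOfIsPushout
      (stab (initial.to X') (initial.to Y') c'.inl c'.inr (initial.to _) αX αY f
        (pb_init αX) (pb_init αY) h₁ h₂ (initial.hom_ext _ _)))
      (Cocones.ext (Iso.refl _) ?_)⟩
    rintro ⟨⟨⟩⟩ <;> exact Category.comp_id _

end Init

end Aux

/-- A finitely complete diexact category with a strict initial object is
(finitary) extensive. -/
theorem extensive_of_diexact_strictInitial {C : Type u} [Category.{v} C]
    [HasFiniteLimits C] [HasInitial C] [HasStrictInitialObjects C]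
    (hC : Diexact C) : FinitaryExtensive C := by
  have hpair : ∀ {X Y : C}, HasColimit (pair X Y) := by
    intro X Y
    obtain ⟨D, h, k, H⟩ := (hC (initial.to X) (initial.to Y) (malcevInit X Y)).1
    exact HasColimit.mk ⟨BinaryCofan.mk h k, cofanColimitOfIsPushout H⟩
  have : HasBinaryCoproducts C := hasBinaryCoproducts_of_hasColimit_pair C
  have : HasFiniteCoproducts C := hasFiniteCoproducts_of_has_binary_and_initial
  exact ⟨fun c hc => vanKampen_aux hC c hc⟩
end

section
/- Every finitely complete diexact category is Barr-exact: every internal equivalence relation (s, t) : E ⇉ A admits a coequaliser which is stable under pullback, and (s, t) is the kernel pair of that coequaliser. -/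
open CategoryTheory CategoryTheory.Limits

universe v u

/-- A pushout square with equal colegs gives a coequalizer. -/
theorem pushoutEqual_coeq {C : Type u} [Category.{v} C] {Z A D : C} {f g : Z ⟶ A}
    {q : A ⟶ D} (hpo : IsPushout f g q q) (w : f ≫ q = g ≫ q) :
    Nonempty (IsColimit (Cofork.ofπ q w)) := by
  refine ⟨Cofork.IsColimit.mk _ (fun c => hpo.desc c.π c.π c.condition)
    (fun c => hpo.inl_desc _ _ _) (fun c m hm => ?_)⟩
  apply hpo.hom_ext
  · rw [hpo.inl_desc]; exact hm
  · rw [hpo.inr_desc]; exact hm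

/-- In a finitely complete diexact category, every internal equivalence
relation `(s, t) : E ⇉ A` admits a coequaliser which is stable under pullback, and `(s, t)`
is the kernel pair of that coequaliser. -/
theorem diexact_barrExact {C : Type u} [Category.{v} C] [HasFiniteLimits C]
    (hC : Diexact C) {E A : C} (s t : E ⟶ A) (hrel : IsEquivRelation s t) :
    ∃ (Q : C) (q : A ⟶ Q) (w : s ≫ q = t ≫ q),
      Nonempty (IsColimit (Cofork.ofπ q w)) ∧
      (∀ ⦃E' A' Q' : C⦄ (s' t' : E' ⟶ A') (q' : A' ⟶ Q')
          (αE : E' ⟶ E) (αA : A' ⟶ A) (αQ : Q' ⟶ Q),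
        IsPullback s' αE αA s → IsPullback t' αE αA t → IsPullback q' αA αQ q →
        ∀ (w' : s' ≫ q' = t' ≫ q'), Nonempty (IsColimit (Cofork.ofπ q' w'))) ∧
      IsPullback s t q q := by
  obtain ⟨hjm, ⟨r, hrs, hrt⟩, ⟨σ, hσs, hσt⟩, ⟨τ, hτs, hτt⟩⟩ := hrel
  have hmal : IsMalcevSpan s t := by
    refine ⟨hjm, ?_⟩
    intro P π₁ π₂ π₃ hP
    have hw1 : π₁ ≫ t = (π₂ ≫ σ) ≫ s := by
      rw [Category.assoc, hσs, hP.w₁]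
    set e : P ⟶ E := pullback.lift π₁ (π₂ ≫ σ) hw1 ≫ τ with he
    have hes : e ≫ s = π₁ ≫ s := by
      rw [he, Category.assoc, hτs, ← Category.assoc, pullback.lift_fst]
    have het : e ≫ t = π₃ ≫ s := by
      rw [he, Category.assoc, hτt, ← Category.assoc, pullback.lift_snd,
        Category.assoc, hσt, hP.w₂]
    refine ⟨pullback.lift e π₃ het ≫ τ, ?_, ?_⟩
    · rw [Category.assoc, hτs, ← Category.assoc, pullback.lift_fst, hes]
    · rw [Category.assoc, hτt, ← Category.assoc, pullback.lift_snd]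
  obtain ⟨⟨D, h, k, hpo⟩, hall⟩ := hC s t hmal
  have hk : h = k := by
    have := hpo.w
    calc h = r ≫ s ≫ h := by rw [← Category.assoc, hrs, Category.id_comp]
    _ = r ≫ t ≫ k := by rw [this]
    _ = k := by rw [← Category.assoc, hrt, Category.id_comp]
  subst hk
  obtain ⟨hstab, hpb⟩ := hall h h hpo
  refine ⟨D, h, hpo.w, pushoutEqual_coeq hpo hpo.w, ?_, hpb⟩
  intro E' A' Q' s' t' q' αE αA αQ hs' ht' hq' w'
  exact pushoutEqual_coeq (hstab s' t' q' q' αE αA αA αQ hs' ht' hq' hq' w') w'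
end

section
/- Let C be a finitely complete, Barr-exact and amalgamable category. Then C admits stable binary unions of subobjects: given monomorphisms a : A ↣ X and b : B ↣ X, form the pullback A ∩ B with projections to A and B, and then the pushout P of the span A ← A ∩ B → B; the induced morphism P → X is a monomorphism, and it exhibits P as the union of the subobjects a and b, this union being stable under pullback. -/
open CategoryTheory CategoryTheory.Limits

universe v u

section Aux

variable {C : Type u} [Category.{v} C]

/-- Build an `IsPullback` from the universal property. -/
lemma isPullback_of_ump {P X Y Z : C} {f : P ⟶ X} {g : P ⟶ Y} {h : X ⟶ Z} {k : Y ⟶ Z}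
    (w : f ≫ h = g ≫ k)
    (hl : ∀ {T : C} (x : T ⟶ X) (yy : T ⟶ Y), x ≫ h = yy ≫ k →
      ∃! l : T ⟶ P, l ≫ f = x ∧ l ≫ g = yy) :
    IsPullback f g h k := by
  refine IsPullback.of_isLimit' ⟨w⟩ ?_
  exact PullbackCone.IsLimit.mk w
    (fun s => (hl s.fst s.snd s.condition).choose)
    (fun s => (hl s.fst s.snd s.condition).choose_spec.1.1)
    (fun s => (hl s.fst s.snd s.condition).choose_spec.1.2)
    (fun s mm h1 h2 => (hl s.fst s.snd s.condition).choose_spec.2 mm ⟨h1, h2⟩)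

/-- Transport pushout-stability along an isomorphism of the cocone object. -/
lemma pushoutStable_transport {Z A B P D : C} {f : Z ⟶ A} {g : Z ⟶ B}
    {inl : A ⟶ P} {inr : B ⟶ P} {h : A ⟶ D} {k : B ⟶ D} {φ : P ⟶ D}
    (hφ : IsIso φ) (h1 : inl ≫ φ = h) (h2 : inr ≫ φ = k)
    (hs : PushoutStable f g h k) : PushoutStable f g inl inr := by
  haveI := hφ
  intro Z' A' B' D' f' g' h' k' αZ αA αB αD pf pg ph pk comm
  refine hs f' g' h' k' αZ αA αB (αD ≫ φ) pf pg ?_ ?_ comm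
  · refine isPullback_of_ump ?_ ?_
    · rw [← Category.assoc, ph.w, Category.assoc, h1]
    · intro T x yy hxy
      have hxy' : x ≫ αD = yy ≫ inl := by
        apply (cancel_mono φ).1
        simpa only [Category.assoc, h1] using hxy
      exact ⟨ph.lift x yy hxy', ⟨ph.lift_fst x yy hxy', ph.lift_snd x yy hxy'⟩,
        fun l' hl' => ph.hom_ext (by rw [hl'.1, ph.lift_fst]) (by rw [hl'.2, ph.lift_snd])⟩
  · refine isPullback_of_ump ?_ ?_
    · rw [← Category.assoc, pk.w, Category.assoc, h2]
    · intro T x yy hxy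
      have hxy' : x ≫ αD = yy ≫ inr := by
        apply (cancel_mono φ).1
        simpa only [Category.assoc, h2] using hxy
      exact ⟨pk.lift x yy hxy', ⟨pk.lift_fst x yy hxy', pk.lift_snd x yy hxy'⟩,
        fun l' hl' => pk.hom_ext (by rw [hl'.1, pk.lift_fst]) (by rw [hl'.2, pk.lift_snd])⟩

/-- Decompose an arbitrary morphism into the cocone object of a stable pushout square:
`T` is covered (jointly epimorphically) by its restrictions to the two legs. -/
lemma decompose_over_pushout [HasPullbacks C] {Z A B P : C}
    {f : Z ⟶ A} {g : Z ⟶ B} {inl : A ⟶ P} {inr : B ⟶ P}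
    (w : f ≫ inl = g ≫ inr) (hstab : PushoutStable f g inl inr)
    {T : C} (t : T ⟶ P) :
    ∃ (A₁ B₁ : C) (α : A₁ ⟶ T) (β : B₁ ⟶ T) (pA : A₁ ⟶ A) (pB : B₁ ⟶ B),
      α ≫ t = pA ≫ inl ∧ β ≫ t = pB ≫ inr ∧
      ∀ {W : C} (u v : T ⟶ W), α ≫ u = α ≫ v → β ≫ u = β ≫ v → u = v := by
  have hτ : (pullback.fst (f ≫ inl) t ≫ f) ≫ inl = pullback.snd (f ≫ inl) t ≫ t := by
    rw [Category.assoc]; exact pullback.condition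
  have hτ' : (pullback.fst (f ≫ inl) t ≫ g) ≫ inr = pullback.snd (f ≫ inl) t ≫ t := by
    rw [Category.assoc, ← w, ← Category.assoc]; exact hτ
  have hFf : IsPullback (pullback.lift (pullback.fst (f ≫ inl) t ≫ f)
      (pullback.snd (f ≫ inl) t) hτ) (pullback.fst (f ≫ inl) t) (pullback.fst inl t) f := by
    refine isPullback_of_ump (pullback.lift_fst _ _ _) ?_
    intro T' x yy hxy
    have hcond : yy ≫ f ≫ inl = (x ≫ pullback.snd inl t) ≫ t := by
      rw [← Category.assoc, ← hxy, Category.assoc, Category.assoc, pullback.condition]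
    refine ⟨pullback.lift yy (x ≫ pullback.snd inl t) hcond,
      ⟨?_, pullback.lift_fst _ _ _⟩, ?_⟩
    · apply pullback.hom_ext
      · rw [Category.assoc, pullback.lift_fst, ← Category.assoc, pullback.lift_fst, hxy]
      · rw [Category.assoc, pullback.lift_snd, pullback.lift_snd]
    · intro l' hl'
      apply pullback.hom_ext
      · rw [pullback.lift_fst]; exact hl'.2
      · rw [pullback.lift_snd]
        have h6 : l' ≫ pullback.snd (f ≫ inl) t =
            (l' ≫ pullback.lift (pullback.fst (f ≫ inl) t ≫ f)
              (pullback.snd (f ≫ inl) t) hτ) ≫ pullback.snd inl t := by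
          rw [Category.assoc, pullback.lift_snd]
        rw [h6, hl'.1]
  have hFg : IsPullback (pullback.lift (pullback.fst (f ≫ inl) t ≫ g)
      (pullback.snd (f ≫ inl) t) hτ') (pullback.fst (f ≫ inl) t) (pullback.fst inr t) g := by
    refine isPullback_of_ump (pullback.lift_fst _ _ _) ?_
    intro T' x yy hxy
    have hcond : yy ≫ f ≫ inl = (x ≫ pullback.snd inr t) ≫ t := by
      rw [w, ← Category.assoc, ← hxy, Category.assoc, Category.assoc, pullback.condition]
    refine ⟨pullback.lift yy (x ≫ pullback.snd inr t) hcond,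
      ⟨?_, pullback.lift_fst _ _ _⟩, ?_⟩
    · apply pullback.hom_ext
      · rw [Category.assoc, pullback.lift_fst, ← Category.assoc, pullback.lift_fst, hxy]
      · rw [Category.assoc, pullback.lift_snd, pullback.lift_snd]
    · intro l' hl'
      apply pullback.hom_ext
      · rw [pullback.lift_fst]; exact hl'.2
      · rw [pullback.lift_snd]
        have h6 : l' ≫ pullback.snd (f ≫ inl) t =
            (l' ≫ pullback.lift (pullback.fst (f ≫ inl) t ≫ g)
              (pullback.snd (f ≫ inl) t) hτ') ≫ pullback.snd inr t := by
          rw [Category.assoc, pullback.lift_snd]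
        rw [h6, hl'.1]
  have hFinl : IsPullback (pullback.snd inl t) (pullback.fst inl t) t inl :=
    (IsPullback.of_hasPullback inl t).flip
  have hFinr : IsPullback (pullback.snd inr t) (pullback.fst inr t) t inr :=
    (IsPullback.of_hasPullback inr t).flip
  have hcomm : pullback.lift (pullback.fst (f ≫ inl) t ≫ f) (pullback.snd (f ≫ inl) t) hτ ≫
      pullback.snd inl t =
      pullback.lift (pullback.fst (f ≫ inl) t ≫ g) (pullback.snd (f ≫ inl) t) hτ' ≫
        pullback.snd inr t := by
    rw [pullback.lift_snd, pullback.lift_snd]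
  have hPO : IsPushout
      (pullback.lift (pullback.fst (f ≫ inl) t ≫ f) (pullback.snd (f ≫ inl) t) hτ)
      (pullback.lift (pullback.fst (f ≫ inl) t ≫ g) (pullback.snd (f ≫ inl) t) hτ')
      (pullback.snd inl t) (pullback.snd inr t) :=
    hstab _ _ _ _ (pullback.fst (f ≫ inl) t) (pullback.fst inl t) (pullback.fst inr t) t
      hFf hFg hFinl hFinr hcomm
  exact ⟨_, _, pullback.snd inl t, pullback.snd inr t, pullback.fst inl t, pullback.fst inr t,
    pullback.condition.symm, pullback.condition.symm,
    fun u v hu hv => hPO.hom_ext hu hv⟩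

/-- The induced morphism out of a stable pushout of a mono span over the intersection
is a monomorphism. -/
lemma mono_of_stable_pushout [HasPullbacks C] {Z A B P X : C}
    {f : Z ⟶ A} {g : Z ⟶ B} {a : A ⟶ X} {b : B ⟶ X} {inl : A ⟶ P} {inr : B ⟶ P} {m : P ⟶ X}
    (ha : Mono a) (hb : Mono b)
    (hZ : IsPullback f g a b)
    (w : f ≫ inl = g ≫ inr)
    (hstab : PushoutStable f g inl inr)
    (hl : inl ≫ m = a) (hr : inr ≫ m = b) : Mono m := by
  have halfA : ∀ {S : C} (q : S ⟶ A) (s : S ⟶ P), q ≫ a = s ≫ m → q ≫ inl = s := by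
    intro S q s hq
    obtain ⟨A₂, B₂, γ, δ, qA, qB, hγ, hδ, hje⟩ := decompose_over_pushout w hstab s
    refine hje _ _ ?_ ?_
    · have h1 : γ ≫ q = qA := by
        haveI := ha
        apply (cancel_mono a).1
        rw [Category.assoc, hq, ← Category.assoc, hγ, Category.assoc, hl]
      rw [← Category.assoc, h1, hγ]
    · have h2 : (δ ≫ q) ≫ a = qB ≫ b := by
        rw [Category.assoc, hq, ← Category.assoc, hδ, Category.assoc, hr]
      calc δ ≫ q ≫ inl = ((hZ.lift (δ ≫ q) qB h2) ≫ f) ≫ inl := by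
            rw [hZ.lift_fst, Category.assoc]
        _ = ((hZ.lift (δ ≫ q) qB h2) ≫ g) ≫ inr := by
            rw [Category.assoc, Category.assoc, w]
        _ = qB ≫ inr := by rw [hZ.lift_snd]
        _ = δ ≫ s := hδ.symm
  have halfB : ∀ {S : C} (q : S ⟶ B) (s : S ⟶ P), q ≫ b = s ≫ m → q ≫ inr = s := by
    intro S q s hq
    obtain ⟨A₂, B₂, γ, δ, qA, qB, hγ, hδ, hje⟩ := decompose_over_pushout w hstab s
    refine hje _ _ ?_ ?_
    · have h2 : qA ≫ a = (γ ≫ q) ≫ b := by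
        rw [Category.assoc, hq, ← Category.assoc, hγ, Category.assoc, hl]
      calc γ ≫ q ≫ inr = ((hZ.lift qA (γ ≫ q) h2) ≫ g) ≫ inr := by
            rw [hZ.lift_snd, Category.assoc]
        _ = ((hZ.lift qA (γ ≫ q) h2) ≫ f) ≫ inl := by
            rw [Category.assoc, Category.assoc, w]
        _ = qA ≫ inl := by rw [hZ.lift_fst]
        _ = γ ≫ s := hγ.symm
    · have h1 : δ ≫ q = qB := by
        haveI := hb
        apply (cancel_mono b).1
        rw [Category.assoc, hq, ← Category.assoc, hδ, Category.assoc, hr]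
      rw [← Category.assoc, h1, hδ]
  constructor
  intro T t₁ t₂ ht
  obtain ⟨A₁, B₁, α, β, pA, pB, hα, hβ, hje⟩ := decompose_over_pushout w hstab t₁
  refine hje _ _ ?_ ?_
  · rw [hα]
    refine halfA pA (α ≫ t₂) ?_
    rw [← hl, ← Category.assoc, ← hα, Category.assoc, Category.assoc, ht]
  · rw [hβ]
    refine halfB pB (β ≫ t₂) ?_
    rw [← hr, ← Category.assoc, ← hβ, Category.assoc, Category.assoc, ht]

end Aux

section Aux2

variable {C : Type u} [Category.{v} C] [HasPullbacks C]

/-- Face of the cube over a leg of the pushout, when pulling back along `y`. -/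
lemma leg_face {A P X Y : C} {inl : A ⟶ P} {m : P ⟶ X} {a : A ⟶ X} {y : Y ⟶ X}
    (hl : inl ≫ m = a)
    (hc : (pullback.fst a y ≫ inl) ≫ m = pullback.snd a y ≫ y) :
    IsPullback (pullback.lift (pullback.fst a y ≫ inl) (pullback.snd a y) hc)
      (pullback.fst a y) (pullback.fst m y) inl := by
  refine isPullback_of_ump (pullback.lift_fst _ _ _) ?_
  intro S x yy hxy
  have hc2 : yy ≫ a = (x ≫ pullback.snd m y) ≫ y := by
    calc yy ≫ a = (yy ≫ inl) ≫ m := by rw [Category.assoc, hl]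
      _ = (x ≫ pullback.fst m y) ≫ m := by rw [← hxy]
      _ = x ≫ (pullback.snd m y ≫ y) := by rw [Category.assoc, pullback.condition]
      _ = (x ≫ pullback.snd m y) ≫ y := by rw [Category.assoc]
  refine ⟨pullback.lift yy (x ≫ pullback.snd m y) hc2, ⟨?_, pullback.lift_fst _ _ _⟩, ?_⟩
  · apply pullback.hom_ext
    · rw [Category.assoc, pullback.lift_fst, ← Category.assoc, pullback.lift_fst, hxy]
    · rw [Category.assoc, pullback.lift_snd, pullback.lift_snd]
  · intro l'' hl''
    apply pullback.hom_ext
    · rw [pullback.lift_fst]; exact hl''.2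
    · rw [pullback.lift_snd]
      have h3 : l'' ≫ pullback.snd a y =
          (l'' ≫ pullback.lift (pullback.fst a y ≫ inl) (pullback.snd a y) hc) ≫
            pullback.snd m y := by
        rw [Category.assoc, pullback.lift_snd]
      rw [h3, hl''.1]

/-- Face of the cube over the first leg of the span, when pulling back along `y`. -/
lemma span_face_left {A B X Y : C} {a : A ⟶ X} {b : B ⟶ X} {y : Y ⟶ X}
    {αZ : pullback (pullback.snd a y) (pullback.snd b y) ⟶ pullback a b}
    (e1 : αZ ≫ pullback.fst a b =
      pullback.fst (pullback.snd a y) (pullback.snd b y) ≫ pullback.fst a y)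
    (e2 : αZ ≫ pullback.snd a b =
      pullback.snd (pullback.snd a y) (pullback.snd b y) ≫ pullback.fst b y) :
    IsPullback (pullback.fst (pullback.snd a y) (pullback.snd b y)) αZ (pullback.fst a y)
      (pullback.fst a b) := by
  refine isPullback_of_ump e1.symm ?_
  intro S x yy hxy
  have hw : (yy ≫ pullback.snd a b) ≫ b = (x ≫ pullback.snd a y) ≫ y := by
    calc (yy ≫ pullback.snd a b) ≫ b = yy ≫ (pullback.fst a b ≫ a) := by
          rw [Category.assoc, pullback.condition]
      _ = (x ≫ pullback.fst a y) ≫ a := by rw [← Category.assoc, ← hxy]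
      _ = x ≫ (pullback.snd a y ≫ y) := by rw [Category.assoc, pullback.condition]
      _ = (x ≫ pullback.snd a y) ≫ y := by rw [Category.assoc]
  refine ⟨pullback.lift x (pullback.lift (yy ≫ pullback.snd a b) (x ≫ pullback.snd a y) hw)
      (pullback.lift_snd _ _ _).symm, ⟨pullback.lift_fst _ _ _, ?_⟩, ?_⟩
  · apply pullback.hom_ext
    · rw [Category.assoc, e1, ← Category.assoc, pullback.lift_fst, hxy]
    · rw [Category.assoc, e2, ← Category.assoc, pullback.lift_snd, pullback.lift_fst]
  · intro l'' hl''
    apply pullback.hom_ext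
    · rw [pullback.lift_fst]; exact hl''.1
    · rw [pullback.lift_snd]
      apply pullback.hom_ext
      · rw [pullback.lift_fst]
        have h4 : (l'' ≫ pullback.snd (pullback.snd a y) (pullback.snd b y)) ≫
            pullback.fst b y = l'' ≫ (αZ ≫ pullback.snd a b) := by
          rw [e2, Category.assoc]
        rw [h4, ← Category.assoc, hl''.2]
      · rw [pullback.lift_snd]
        have h5 : (l'' ≫ pullback.snd (pullback.snd a y) (pullback.snd b y)) ≫
            pullback.snd b y =
            (l'' ≫ pullback.fst (pullback.snd a y) (pullback.snd b y)) ≫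
              pullback.snd a y := by
          rw [Category.assoc, Category.assoc, ← pullback.condition]
        rw [h5, hl''.1]

/-- Face of the cube over the second leg of the span, when pulling back along `y`. -/
lemma span_face_right {A B X Y : C} {a : A ⟶ X} {b : B ⟶ X} {y : Y ⟶ X}
    {αZ : pullback (pullback.snd a y) (pullback.snd b y) ⟶ pullback a b}
    (e1 : αZ ≫ pullback.fst a b =
      pullback.fst (pullback.snd a y) (pullback.snd b y) ≫ pullback.fst a y)
    (e2 : αZ ≫ pullback.snd a b =
      pullback.snd (pullback.snd a y) (pullback.snd b y) ≫ pullback.fst b y) :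
    IsPullback (pullback.snd (pullback.snd a y) (pullback.snd b y)) αZ (pullback.fst b y)
      (pullback.snd a b) := by
  refine isPullback_of_ump e2.symm ?_
  intro S x yy hxy
  have hw : (yy ≫ pullback.fst a b) ≫ a = (x ≫ pullback.snd b y) ≫ y := by
    calc (yy ≫ pullback.fst a b) ≫ a = yy ≫ (pullback.snd a b ≫ b) := by
          rw [Category.assoc, ← pullback.condition]
      _ = (x ≫ pullback.fst b y) ≫ b := by rw [← Category.assoc, ← hxy]
      _ = x ≫ (pullback.snd b y ≫ y) := by rw [Category.assoc, pullback.condition]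
      _ = (x ≫ pullback.snd b y) ≫ y := by rw [Category.assoc]
  refine ⟨pullback.lift (pullback.lift (yy ≫ pullback.fst a b) (x ≫ pullback.snd b y) hw) x
      (pullback.lift_snd _ _ _), ⟨pullback.lift_snd _ _ _, ?_⟩, ?_⟩
  · apply pullback.hom_ext
    · rw [Category.assoc, e1, ← Category.assoc, pullback.lift_fst, pullback.lift_fst]
    · rw [Category.assoc, e2, ← Category.assoc, pullback.lift_snd, hxy]
  · intro l'' hl''
    apply pullback.hom_ext
    · rw [pullback.lift_fst]
      apply pullback.hom_ext
      · rw [pullback.lift_fst]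
        have h4 : (l'' ≫ pullback.fst (pullback.snd a y) (pullback.snd b y)) ≫
            pullback.fst a y = l'' ≫ (αZ ≫ pullback.fst a b) := by
          rw [e1, Category.assoc]
        rw [h4, ← Category.assoc, hl''.2]
      · rw [pullback.lift_snd]
        have h5 : (l'' ≫ pullback.fst (pullback.snd a y) (pullback.snd b y)) ≫
            pullback.snd a y =
            (l'' ≫ pullback.snd (pullback.snd a y) (pullback.snd b y)) ≫
              pullback.snd b y := by
          rw [Category.assoc, Category.assoc, pullback.condition]
        rw [h5, hl''.1]
    · rw [pullback.lift_snd]; exact hl''.1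

end Aux2
/-- In a finitely complete, Barr-exact and amalgamable category, given
monomorphisms `a : A ⟶ X` and `b : B ⟶ X`, and a pushout `P` of the span
`A ← A ∩ B → B` (where `A ∩ B` is the pullback of `a` and `b`), the induced morphism
`P ⟶ X` is a monomorphism exhibiting `P` as the union of the subobjects `a` and `b`,
and this union is stable under pullback. -/
theorem stable_binary_unions {C : Type u} [Category.{v} C] [HasFiniteLimits C]
    (hBE : BarrExact C) (hAm : Amalgamable C)
    {A B X : C} (a : A ⟶ X) (b : B ⟶ X) (ha : Mono a) (hb : Mono b)
    {P : C} (inl : A ⟶ P) (inr : B ⟶ P)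
    (sq : IsPushout (pullback.fst a b) (pullback.snd a b) inl inr) :
    IsUnionOf a b (sq.desc a b pullback.condition) ∧
    ∀ ⦃Y : C⦄ (y : Y ⟶ X),
      IsUnionOf (pullback.snd a y) (pullback.snd b y)
        (pullback.snd (sq.desc a b pullback.condition) y) := by
  haveI := ha; haveI := hb
  have hml : inl ≫ sq.desc a b pullback.condition = a := sq.inl_desc a b pullback.condition
  have hmr : inr ≫ sq.desc a b pullback.condition = b := sq.inr_desc a b pullback.condition
  set m : P ⟶ X := sq.desc a b pullback.condition with hm
  have hZ : IsPullback (pullback.fst a b) (pullback.snd a b) a b := IsPullback.of_hasPullback a b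
  obtain ⟨D, h, k, hPO, hstabD, hPBD⟩ :=
    hAm (pullback.fst a b) (pullback.snd a b) inferInstance inferInstance
  -- transport pushout-stability from the amalgamation pushout to `sq`
  have hφψ : sq.desc h k hPO.w ≫ hPO.desc inl inr sq.w = 𝟙 P := by
    apply sq.hom_ext
    · rw [Category.comp_id, ← Category.assoc, sq.inl_desc, hPO.inl_desc]
    · rw [Category.comp_id, ← Category.assoc, sq.inr_desc, hPO.inr_desc]
  have hψφ : hPO.desc inl inr sq.w ≫ sq.desc h k hPO.w = 𝟙 D := by
    apply hPO.hom_ext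
    · rw [Category.comp_id, ← Category.assoc, hPO.inl_desc, sq.inl_desc]
    · rw [Category.comp_id, ← Category.assoc, hPO.inr_desc, sq.inr_desc]
  have hstab : PushoutStable (pullback.fst a b) (pullback.snd a b) inl inr :=
    pushoutStable_transport ⟨hPO.desc inl inr sq.w, hφψ, hψφ⟩
      (sq.inl_desc h k hPO.w) (sq.inr_desc h k hPO.w) hstabD
  have hmono : Mono m := mono_of_stable_pushout ha hb hZ sq.w hstab hml hmr
  constructor
  · refine ⟨hmono, ⟨inl, hml⟩, ⟨inr, hmr⟩, ?_⟩
    intro Q c hc hac hbc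
    obtain ⟨wa, hwa⟩ := hac
    obtain ⟨wb, hwb⟩ := hbc
    haveI := hc
    have hcomp : pullback.fst a b ≫ wa = pullback.snd a b ≫ wb := by
      apply (cancel_mono c).1
      rw [Category.assoc, hwa, Category.assoc, hwb]
      exact pullback.condition
    refine ⟨sq.desc wa wb hcomp, ?_⟩
    apply sq.hom_ext
    · rw [← Category.assoc, sq.inl_desc, hwa, hml]
    · rw [← Category.assoc, sq.inr_desc, hwb, hmr]
  · intro Y y
    have hcondA : (pullback.fst a y ≫ inl) ≫ m = pullback.snd a y ≫ y := by
      rw [Category.assoc, hml]; exact pullback.condition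
    have hcondB : (pullback.fst b y ≫ inr) ≫ m = pullback.snd b y ≫ y := by
      rw [Category.assoc, hmr]; exact pullback.condition
    set inl' : pullback a y ⟶ pullback m y :=
      pullback.lift (pullback.fst a y ≫ inl) (pullback.snd a y) hcondA with hinl'
    set inr' : pullback b y ⟶ pullback m y :=
      pullback.lift (pullback.fst b y ≫ inr) (pullback.snd b y) hcondB with hinr'
    have hcondZ : (pullback.fst (pullback.snd a y) (pullback.snd b y) ≫ pullback.fst a y) ≫ a =
        (pullback.snd (pullback.snd a y) (pullback.snd b y) ≫ pullback.fst b y) ≫ b := by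
      calc (pullback.fst (pullback.snd a y) (pullback.snd b y) ≫ pullback.fst a y) ≫ a
          = pullback.fst (pullback.snd a y) (pullback.snd b y) ≫
              (pullback.snd a y ≫ y) := by rw [Category.assoc, pullback.condition]
        _ = (pullback.fst (pullback.snd a y) (pullback.snd b y) ≫ pullback.snd a y) ≫ y := by
              rw [Category.assoc]
        _ = (pullback.snd (pullback.snd a y) (pullback.snd b y) ≫ pullback.snd b y) ≫ y := by
              rw [pullback.condition]
        _ = pullback.snd (pullback.snd a y) (pullback.snd b y) ≫
              (pullback.fst b y ≫ b) := by rw [Category.assoc, ← pullback.condition]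
        _ = (pullback.snd (pullback.snd a y) (pullback.snd b y) ≫ pullback.fst b y) ≫ b := by
              rw [Category.assoc]
    set αZ : pullback (pullback.snd a y) (pullback.snd b y) ⟶ pullback a b :=
      pullback.lift (pullback.fst (pullback.snd a y) (pullback.snd b y) ≫ pullback.fst a y)
        (pullback.snd (pullback.snd a y) (pullback.snd b y) ≫ pullback.fst b y) hcondZ with hαZ
    have e1 : αZ ≫ pullback.fst a b =
        pullback.fst (pullback.snd a y) (pullback.snd b y) ≫ pullback.fst a y :=
      pullback.lift_fst _ _ _
    have e2 : αZ ≫ pullback.snd a b =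
        pullback.snd (pullback.snd a y) (pullback.snd b y) ≫ pullback.fst b y :=
      pullback.lift_snd _ _ _
    have hcomm : pullback.fst (pullback.snd a y) (pullback.snd b y) ≫ inl' =
        pullback.snd (pullback.snd a y) (pullback.snd b y) ≫ inr' := by
      apply pullback.hom_ext
      · rw [Category.assoc, Category.assoc, hinl', hinr', pullback.lift_fst, pullback.lift_fst,
          ← Category.assoc, ← Category.assoc, ← e1, ← e2, Category.assoc, Category.assoc, sq.w]
      · rw [Category.assoc, Category.assoc, hinl', hinr', pullback.lift_snd, pullback.lift_snd]
        exact pullback.condition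
    have hPO' : IsPushout (pullback.fst (pullback.snd a y) (pullback.snd b y))
        (pullback.snd (pullback.snd a y) (pullback.snd b y)) inl' inr' :=
      hstab _ _ _ _ αZ (pullback.fst a y) (pullback.fst b y) (pullback.fst m y)
        (span_face_left e1 e2) (span_face_right e1 e2)
        (leg_face hml hcondA) (leg_face hmr hcondB) hcomm
    have hmono' : Mono (pullback.snd m y) := by
      haveI := hmono
      infer_instance
    refine ⟨hmono', ⟨inl', pullback.lift_snd _ _ _⟩, ⟨inr', pullback.lift_snd _ _ _⟩, ?_⟩
    intro Q c hc hac hbc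
    obtain ⟨wa, hwa⟩ := hac
    obtain ⟨wb, hwb⟩ := hbc
    haveI := hc
    have hcomp : pullback.fst (pullback.snd a y) (pullback.snd b y) ≫ wa =
        pullback.snd (pullback.snd a y) (pullback.snd b y) ≫ wb := by
      apply (cancel_mono c).1
      rw [Category.assoc, hwa, Category.assoc, hwb]
      exact pullback.condition
    refine ⟨hPO'.desc wa wb hcomp, ?_⟩
    apply hPO'.hom_ext
    · rw [← Category.assoc, hPO'.inl_desc, hwa, hinl', pullback.lift_snd]
    · rw [← Category.assoc, hPO'.inr_desc, hwb, hinr', pullback.lift_snd]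
end

section
/- Every Grothendieck topos, i.e. every category of sheaves of sets on a small site, is diexact. -/
open CategoryTheory CategoryTheory.Limits

universe v u

namespace MalcevAux

open CategoryTheory CategoryTheory.Limits

universe w j₁ j₂ k₁ k₂ w'

/-! ### Elementwise helpers for pullbacks in `Type` -/

theorem pb_inj {P X Y S : Type w} {fst : P ⟶ X} {snd : P ⟶ Y} {u : X ⟶ S} {v : Y ⟶ S}
    (hp : IsPullback fst snd u v) {p q : P} (h1 : fst p = fst q) (h2 : snd p = snd q) :
    p = q :=
  PullbackCone.IsLimit.type_ext hp.isLimit h1 h2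

theorem pb_lift {P X Y S : Type w} {fst : P ⟶ X} {snd : P ⟶ Y} {u : X ⟶ S} {v : Y ⟶ S}
    (hp : IsPullback fst snd u v) (x : X) (y : Y) (h : u x = v y) :
    ∃ p : P, fst p = x ∧ snd p = y := by
  refine ⟨(PullbackCone.IsLimit.equivPullbackObj hp.isLimit).symm ⟨(x, y), h⟩, ?_, ?_⟩
  · exact PullbackCone.IsLimit.equivPullbackObj_symm_apply_fst hp.isLimit _
  · exact PullbackCone.IsLimit.equivPullbackObj_symm_apply_snd hp.isLimit _

section TypeCore

variable {Z A B : Type w} (f : Z ⟶ A) (g : Z ⟶ B)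

/-- Difunctionality of the relation induced by the span `(f, g)`. -/
def Difunc : Prop :=
  ∀ z₁ z₂ z₃ : Z, g z₁ = g z₂ → f z₂ = f z₃ → ∃ z, f z = f z₁ ∧ g z = g z₃

/-- The equivalence relation on `A ⊕ B` generated by `f z ~ g z`, for a difunctional span. -/
inductive MRel : A ⊕ B → A ⊕ B → Prop
  | refl (x) : MRel x x
  | inl_inl (a a' : A) (z w : Z) (hz : f z = a) (hw : f w = a') (h : g z = g w) :
      MRel (Sum.inl a) (Sum.inl a')
  | inl_inr (a : A) (b : B) (z : Z) (hz : f z = a) (hw : g z = b) :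
      MRel (Sum.inl a) (Sum.inr b)
  | inr_inl (a : A) (b : B) (z : Z) (hz : f z = a) (hw : g z = b) :
      MRel (Sum.inr b) (Sum.inl a)
  | inr_inr (b b' : B) (z w : Z) (hz : g z = b) (hw : g w = b') (h : f z = f w) :
      MRel (Sum.inr b) (Sum.inr b')

variable {f g}

theorem MRel.symm' {x y : A ⊕ B} (h : MRel f g x y) : MRel f g y x := by
  cases h with
  | refl x => exact .refl x
  | inl_inl a a' z w hz hw h => exact .inl_inl a' a w z hw hz h.symm
  | inl_inr a b z hz hw => exact .inr_inl a b z hz hw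
  | inr_inl a b z hz hw => exact .inl_inr a b z hz hw
  | inr_inr b b' z w hz hw h => exact .inr_inr b' b w z hw hz h.symm

theorem mrel_inl_inl {a a' : A} (h : MRel f g (Sum.inl a) (Sum.inl a')) :
    a = a' ∨ ∃ z w, g z = g w ∧ f z = a ∧ f w = a' := by
  cases h with
  | refl x => exact Or.inl rfl
  | inl_inl _ _ z w hz hw h => exact Or.inr ⟨z, w, h, hz, hw⟩

theorem mrel_inl_inr {a : A} {b : B} (h : MRel f g (Sum.inl a) (Sum.inr b)) :
    ∃ z, f z = a ∧ g z = b := by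
  cases h with
  | inl_inr _ _ z hz hw => exact ⟨z, hz, hw⟩

theorem mrel_inr_inl {a : A} {b : B} (h : MRel f g (Sum.inr b) (Sum.inl a)) :
    ∃ z, f z = a ∧ g z = b := by
  cases h with
  | inr_inl _ _ z hz hw => exact ⟨z, hz, hw⟩

theorem mrel_inr_inr {b b' : B} (h : MRel f g (Sum.inr b) (Sum.inr b')) :
    b = b' ∨ ∃ z w, f z = f w ∧ g z = b ∧ g w = b' := by
  cases h with
  | refl x => exact Or.inl rfl
  | inr_inr _ _ z w hz hw h => exact Or.inr ⟨z, w, h, hz, hw⟩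

theorem mrel_equivalence (hd : Difunc f g) : _root_.Equivalence (MRel f g) := by
  refine ⟨.refl, MRel.symm', ?_⟩
  rintro (a | b) (a' | b') (a'' | b'') hxy hyt
  · obtain rfl | ⟨z, w, hgzw, rfl, hfw⟩ := mrel_inl_inl hxy
    · exact hyt
    obtain rfl | ⟨z', w', hgz'w', hfz', rfl⟩ := mrel_inl_inl hyt
    · exact .inl_inl _ _ z w rfl hfw hgzw
    obtain ⟨p, hp1, hp2⟩ := hd z w z' hgzw (hfw.trans hfz'.symm)
    exact .inl_inl _ _ p w' hp1 rfl (hp2.trans hgz'w')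
  · obtain rfl | ⟨z, w, hgzw, rfl, hfw⟩ := mrel_inl_inl hxy
    · exact hyt
    obtain ⟨z', hfz', hgz'⟩ := mrel_inl_inr hyt
    obtain ⟨p, hp1, hp2⟩ := hd z w z' hgzw (hfw.trans hfz'.symm)
    exact .inl_inr _ _ p hp1 (hp2.trans hgz')
  · obtain ⟨z, hfz, hgz⟩ := mrel_inl_inr hxy
    obtain ⟨w, hfw, hgw⟩ := mrel_inr_inl hyt
    exact .inl_inl _ _ z w hfz hfw (hgz.trans hgw.symm)
  · obtain ⟨z, hfz, hgz⟩ := mrel_inl_inr hxy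
    obtain rfl | ⟨z', w', hfz'w', hgz', rfl⟩ := mrel_inr_inr hyt
    · exact .inl_inr _ _ z hfz hgz
    obtain ⟨p, hp1, hp2⟩ := hd z z' w' (hgz.trans hgz'.symm) hfz'w'
    exact .inl_inr _ _ p (hp1.trans hfz) hp2
  · obtain ⟨z, hfz, hgz⟩ := mrel_inr_inl hxy
    obtain rfl | ⟨z', w', hgz'w', hfz', rfl⟩ := mrel_inl_inl hyt
    · exact .inr_inl _ _ z hfz hgz
    obtain ⟨p, hp1, hp2⟩ := hd w' z' z hgz'w'.symm (hfz'.trans hfz.symm)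
    exact .inr_inl _ _ p hp1 (hp2.trans hgz)
  · obtain ⟨z, hfz, hgz⟩ := mrel_inr_inl hxy
    obtain ⟨w, hfw, hgw⟩ := mrel_inl_inr hyt
    exact .inr_inr _ _ z w hgz hgw (hfz.trans hfw.symm)
  · obtain rfl | ⟨z, w, hfzw, rfl, hgw⟩ := mrel_inr_inr hxy
    · exact hyt
    obtain ⟨z', hfz', hgz'⟩ := mrel_inr_inl hyt
    obtain ⟨p, hp1, hp2⟩ := hd z' w z (hgz'.trans hgw.symm) hfzw.symm
    exact .inr_inl _ _ p (hp1.trans hfz') hp2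
  · obtain rfl | ⟨z, w, hfzw, rfl, hgw⟩ := mrel_inr_inr hxy
    · exact hyt
    obtain rfl | ⟨z', w', hfz'w', hgz', rfl⟩ := mrel_inr_inr hyt
    · exact .inr_inr _ _ z w rfl hgw hfzw
    obtain ⟨p, hp1, hp2⟩ := hd z' w z (hgz'.trans hgw.symm) hfzw.symm
    exact .inr_inr _ _ p w' hp2 rfl (hp1.trans hfz'w')

variable (f g) in
theorem mrel_of_pushout_rel {x y : A ⊕ B} (h : Types.Pushout.Rel f g x y) : MRel f g x y := by
  cases h with
  | inl_inr z => exact .inl_inr _ _ z rfl rfl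

theorem pushout_mk_eq_iff (hd : Difunc f g) {x y : A ⊕ B} :
    (Quot.mk _ x : Types.Pushout f g) = Quot.mk _ y ↔ MRel f g x y := by
  constructor
  · intro h
    have h' : (Quot.mk (MRel f g) x) = Quot.mk (MRel f g) y := by
      have := congrArg (Quot.lift (Quot.mk (MRel f g))
        (fun a b hab => Quot.sound (mrel_of_pushout_rel f g hab)) :
          Types.Pushout f g → Quot (MRel f g)) h
      exact this
    exact ((mrel_equivalence hd).quot_mk_eq_iff _ _).mp h'
  · intro h
    have sound : ∀ a b : A ⊕ B, MRel f g a b →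
        (Quot.mk _ a : Types.Pushout f g) = Quot.mk _ b := by
      intro a b hab
      cases hab with
      | refl x => rfl
      | inl_inl a a' z w hz hw h =>
        subst hz; subst hw
        refine (Quot.sound (Types.Pushout.Rel.inl_inr z)).trans ?_
        rw [h]
        exact (Quot.sound (Types.Pushout.Rel.inl_inr w)).symm
      | inl_inr a b z hz hw =>
        subst hz; subst hw; exact Quot.sound (Types.Pushout.Rel.inl_inr z)
      | inr_inl a b z hz hw =>
        subst hz; subst hw; exact (Quot.sound (Types.Pushout.Rel.inl_inr z)).symm
      | inr_inr b b' z w hz hw h =>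
        subst hz; subst hw
        refine ((Quot.sound (Types.Pushout.Rel.inl_inr z)).symm).trans ?_
        rw [h]
        exact Quot.sound (Types.Pushout.Rel.inl_inr w)
    exact sound x y h

variable (f g)

theorem typ_isPushout : IsPushout f g (Types.Pushout.inl f g) (Types.Pushout.inr f g) :=
  IsPushout.of_isColimit (Types.Pushout.isColimitCocone f g)

variable {f g}

theorem typ_isPullback (hinj : ∀ z z' : Z, f z = f z' → g z = g z' → z = z')
    (hd : Difunc f g) :
    IsPullback f g (Types.Pushout.inl f g) (Types.Pushout.inr f g) := by
  have w : CommSq f g (Types.Pushout.inl f g) (Types.Pushout.inr f g) :=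
    ⟨Types.Pushout.condition f g⟩
  refine IsPullback.of_isLimit' w ((PullbackCone.isLimitEquivBijective w.cone).symm ⟨?_, ?_⟩)
  · intro z z' h
    exact hinj z z' (congrArg (fun p => p.1.1) h) (congrArg (fun p => p.1.2) h)
  · rintro ⟨⟨a, b⟩, hab⟩
    obtain ⟨z, hz1, hz2⟩ := mrel_inl_inr ((pushout_mk_eq_iff hd).mp hab)
    exact ⟨z, Subtype.ext (Prod.ext hz1 hz2)⟩

theorem typ_stable (hd : Difunc f g) :
    PushoutStable f g (Types.Pushout.inl f g) (Types.Pushout.inr f g) := by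
  intro Z' A' B' D' f' g' h' k' αZ αA αB αD hf hg hh hk w'
  have hfw : ∀ z', αA (f' z') = f (αZ z') := fun z' => ConcreteCategory.congr_hom hf.w z'
  have hgw : ∀ z', αB (g' z') = g (αZ z') := fun z' => ConcreteCategory.congr_hom hg.w z'
  have hhw : ∀ a', αD (h' a') = Types.Pushout.inl f g (αA a') := fun a' => ConcreteCategory.congr_hom hh.w a'
  have hkw : ∀ b', αD (k' b') = Types.Pushout.inr f g (αB b') := fun b' => ConcreteCategory.congr_hom hk.w b'
  have w'e : ∀ z', h' (f' z') = k' (g' z') := fun z' => ConcreteCategory.congr_hom w' z'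
  set map' : A' ⊕ B' → D' := Sum.elim h' k' with hmap'
  have surj : ∀ d' : D', ∃ x' : A' ⊕ B', map' x' = d' := by
    intro d'
    obtain ⟨x, hx⟩ : ∃ x, (Quot.mk _ x : Types.Pushout f g) = αD d' := Quot.exists_rep _
    cases x with
    | inl a =>
      obtain ⟨a', ha'1, _⟩ := pb_lift hh d' a hx.symm
      exact ⟨Sum.inl a', ha'1⟩
    | inr b =>
      obtain ⟨b', hb'1, _⟩ := pb_lift hk d' b hx.symm
      exact ⟨Sum.inr b', hb'1⟩
  have const : ∀ (s : PushoutCocone f' g') (x' y' : A' ⊕ B'), map' x' = map' y' →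
      Sum.elim s.inl s.inr x' = Sum.elim s.inl s.inr y' := by
    intro s x' y' hxy
    have hqm : ∀ u' : A' ⊕ B',
        (Quot.mk _ (Sum.map αA αB u') : Types.Pushout f g) = αD (map' u') := by
      rintro (a' | b')
      · exact (hhw a').symm
      · exact (hkw b').symm
    have hmr : MRel f g (Sum.map αA αB x') (Sum.map αA αB y') := by
      refine (pushout_mk_eq_iff hd).mp ?_
      rw [hqm x', hqm y', hxy]
    obtain (a'₁ | b'₁) := x' <;> obtain (a'₂ | b'₂) := y' <;> dsimp [Sum.map] at hmr ⊢
    · obtain heq | ⟨z, w, hgzw, hfz, hfw⟩ := mrel_inl_inl hmr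
      · obtain rfl := pb_inj hh (hxy : h' a'₁ = h' a'₂) heq
        rfl
      · obtain ⟨z'₁, hz'₁1, hz'₁2⟩ := pb_lift hf a'₁ z hfz.symm
        obtain ⟨z'₂, hz'₂1, hz'₂2⟩ := pb_lift hf a'₂ w hfw.symm
        have hb : g' z'₁ = g' z'₂ := by
          refine pb_inj hk ?_ ?_
          · rw [← w'e z'₁, ← w'e z'₂, hz'₁1, hz'₂1]; exact hxy
          · rw [hgw z'₁, hgw z'₂, hz'₁2, hz'₂2]; exact hgzw
        calc s.inl a'₁ = s.inl (f' z'₁) := by rw [hz'₁1]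
          _ = s.inr (g' z'₁) := ConcreteCategory.congr_hom s.condition z'₁
          _ = s.inr (g' z'₂) := by rw [hb]
          _ = s.inl (f' z'₂) := (ConcreteCategory.congr_hom s.condition z'₂).symm
          _ = s.inl a'₂ := by rw [hz'₂1]
    · obtain ⟨z, hfz, hgz⟩ := mrel_inl_inr hmr
      obtain ⟨z', hz'1, hz'2⟩ := pb_lift hf a'₁ z hfz.symm
      have hb : g' z' = b'₂ := by
        refine pb_inj hk ?_ ?_
        · rw [← w'e z', hz'1]; exact hxy
        · rw [hgw z', hz'2]; exact hgz
      calc s.inl a'₁ = s.inl (f' z') := by rw [hz'1]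
        _ = s.inr (g' z') := ConcreteCategory.congr_hom s.condition z'
        _ = s.inr b'₂ := by rw [hb]
    · obtain ⟨z, hfz, hgz⟩ := mrel_inr_inl hmr
      obtain ⟨z', hz'1, hz'2⟩ := pb_lift hf a'₂ z hfz.symm
      have hb : g' z' = b'₁ := by
        refine pb_inj hk ?_ ?_
        · rw [← w'e z', hz'1]; exact hxy.symm
        · rw [hgw z', hz'2]; exact hgz
      calc s.inr b'₁ = s.inr (g' z') := by rw [hb]
        _ = s.inl (f' z') := (ConcreteCategory.congr_hom s.condition z').symm
        _ = s.inl a'₂ := by rw [hz'1]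
    · obtain heq | ⟨z, w, hfzw, hgz, hgw⟩ := mrel_inr_inr hmr
      · obtain rfl := pb_inj hk (hxy : k' b'₁ = k' b'₂) heq
        rfl
      · obtain ⟨z'₁, hz'₁1, hz'₁2⟩ := pb_lift hg b'₁ z hgz.symm
        obtain ⟨z'₂, hz'₂1, hz'₂2⟩ := pb_lift hg b'₂ w hgw.symm
        have ha : f' z'₁ = f' z'₂ := by
          refine pb_inj hh ?_ ?_
          · rw [w'e z'₁, w'e z'₂, hz'₁1, hz'₂1]; exact hxy
          · rw [hfw z'₁, hfw z'₂, hz'₁2, hz'₂2]; exact hfzw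
        calc s.inr b'₁ = s.inr (g' z'₁) := by rw [hz'₁1]
          _ = s.inl (f' z'₁) := (ConcreteCategory.congr_hom s.condition z'₁).symm
          _ = s.inl (f' z'₂) := by rw [ha]
          _ = s.inr (g' z'₂) := ConcreteCategory.congr_hom s.condition z'₂
          _ = s.inr b'₂ := by rw [hz'₂1]
  refine IsPushout.of_isColimit' ⟨w'⟩ ?_
  refine PushoutCocone.IsColimit.mk _
    (fun s => TypeCat.ofHom fun d' => Sum.elim s.inl s.inr (Classical.choose (surj d'))) ?_ ?_ ?_
  · intro s
    ext a'
    exact (const s _ (Sum.inl a') (Classical.choose_spec (surj (h' a')))).trans rfl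
  · intro s
    ext b'
    exact (const s _ (Sum.inr b') (Classical.choose_spec (surj (k' b')))).trans rfl
  · intro s m h₁ h₂
    ext d'
    show m d' = Sum.elim s.inl s.inr (Classical.choose (surj d'))
    obtain ⟨x', hx'⟩ := surj d'
    have hcst : Sum.elim s.inl s.inr (Classical.choose (surj d')) =
        Sum.elim s.inl s.inr x' :=
      const s _ x' ((Classical.choose_spec (surj d')).trans hx'.symm)
    rw [hcst, ← hx']
    cases x' with
    | inl a' => exact ConcreteCategory.congr_hom h₁ a'
    | inr b' => exact ConcreteCategory.congr_hom h₂ b'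

end TypeCore

/-! ### Plumbing between cube-shaped and cocone-shaped stability -/

section Plumbing

variable {C : Type k₁} [Category.{k₂} C]

theorem pushoutStable_of_isUniversal {Z A B D : C}
    {f : Z ⟶ A} {g : Z ⟶ B} {h : A ⟶ D} {k : B ⟶ D} (w : f ≫ h = g ≫ k)
    (H : IsUniversalColimit (PushoutCocone.mk h k w)) :
    PushoutStable f g h k := by
  intro Z' A' B' D' f' g' h' k' αZ αA αB αD hf hg hh hk w'
  have wsq : CommSq f' g' h' k' := ⟨w'⟩
  refine IsPushout.of_isColimit' wsq ?_
  refine ((H wsq.cocone ⟨by rintro (_ | _ | _); exacts [αZ, αA, αB], ?_⟩ αD ?_ ?_ ?_)).some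
  · rintro i _ (_ | _ | _)
    · rw [WidePushoutShape.hom_id, CategoryTheory.Functor.map_id,
        CategoryTheory.Functor.map_id, Category.comp_id, Category.id_comp]
    exacts [hf.w, hg.w]
  · ext (_ | _ | _)
    · dsimp; rw [PushoutCocone.condition_zero]; erw [Category.assoc, hh.w, hf.w_assoc]; rfl
    exacts [hh.w.symm, hk.w.symm]
  · rintro i _ (_ | _ | _)
    · rw [WidePushoutShape.hom_id, CategoryTheory.Functor.map_id,
        CategoryTheory.Functor.map_id]
      exact IsPullback.of_horiz_isIso ⟨by rw [Category.comp_id, Category.id_comp]⟩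
    exacts [hf, hg]
  · rintro (_ | _ | _)
    · dsimp; rw [PushoutCocone.condition_zero]; exact hf.paste_horiz hh
    exacts [hh, hk]

theorem isUniversal_of_pushoutStable {Z A B D : C}
    {f : Z ⟶ A} {g : Z ⟶ B} {h : A ⟶ D} {k : B ⟶ D}
    (hpo : IsPushout f g h k) (hst : PushoutStable f g h k) :
    IsUniversalColimit (PushoutCocone.mk h k hpo.w) := by
  intro F' c' α fα eα hα H
  have wtop : F'.map WalkingSpan.Hom.fst ≫ c'.ι.app WalkingSpan.left =
      F'.map WalkingSpan.Hom.snd ≫ c'.ι.app WalkingSpan.right := by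
    simp only [Cocone.w]
  have hf' : IsPullback (F'.map WalkingSpan.Hom.fst) (α.app WalkingSpan.zero)
      (α.app WalkingSpan.left) f := hα WalkingSpan.Hom.fst
  have hg' : IsPullback (F'.map WalkingSpan.Hom.snd) (α.app WalkingSpan.zero)
      (α.app WalkingSpan.right) g := hα WalkingSpan.Hom.snd
  have hh' : IsPullback (c'.ι.app WalkingSpan.left) (α.app WalkingSpan.left) fα h :=
    H WalkingSpan.left
  have hk' : IsPullback (c'.ι.app WalkingSpan.right) (α.app WalkingSpan.right) fα k :=
    H WalkingSpan.right
  have hpo' : IsPushout (F'.map WalkingSpan.Hom.fst) (F'.map WalkingSpan.Hom.snd)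
      (c'.ι.app WalkingSpan.left) (c'.ι.app WalkingSpan.right) :=
    hst _ _ _ _ _ _ _ fα hf' hg' hh' hk' wtop
  rw [(IsColimit.equivOfNatIsoOfIso (diagramIsoSpan F') c' (PushoutCocone.mk _ _ wtop)
        (Cocones.ext (Iso.refl c'.pt) (by
          rintro (_ | _ | _) <;>
            simp [diagramIsoSpan] <;> exact (Category.comp_id _).trans (Category.id_comp _)))).nonempty_congr]
  exact ⟨hpo'.isColimit⟩

end Plumbing

/-! ### Pointwise criteria in functor categories -/

section Evaluation

variable {Q : Type j₁} [Category.{j₂} Q] {K : Type k₁} [Category.{k₂} K]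

theorem isUniversalColimit_of_evaluation' (F : Q ⥤ K ⥤ Type w) (c : Cocone F)
    (hc : ∀ x : K, IsUniversalColimit (((evaluation K (Type w)).obj x).mapCocone c)) :
    IsUniversalColimit c := by
  intro F' c' α f e hα H
  refine ⟨evaluationJointlyReflectsColimits _ fun x => ?_⟩
  refine (hc x (((evaluation K (Type w)).obj x).mapCocone c') (Functor.whiskerRight α _)
      (((evaluation K (Type w)).obj x).map f) ?_ (hα.whiskerRight _) ?_).some
  · ext y a
    exact congr_fun (congrArg (fun φ => (ConcreteCategory.hom φ).toFun) (NatTrans.congr_app (NatTrans.congr_app e y) x)) a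
  · intro j
    exact (H j).map ((evaluation K (Type w)).obj x)

theorem isPullback_of_evaluation {P X Y S : K ⥤ Type w}
    {fst : P ⟶ X} {snd : P ⟶ Y} {u : X ⟶ S} {v : Y ⟶ S} (w : fst ≫ u = snd ≫ v)
    (H : ∀ x, IsPullback (fst.app x) (snd.app x) (u.app x) (v.app x)) :
    IsPullback fst snd u v := by
  refine IsPullback.of_isLimit' ⟨w⟩ ?_
  refine evaluationJointlyReflectsLimits _ fun x => ?_
  refine (isLimitMapConePullbackConeEquiv _ _).symm ?_
  exact (H x).isLimit

end Evaluation

/-! ### A triple limit built from pullbacks -/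

theorem tripleLimit_mk {C : Type k₁} [Category.{k₂} C] [HasPullbacks C] {Z A B : C}
    (f : Z ⟶ A) (g : Z ⟶ B) :
    IsTripleLimit f g
      (pullback.fst (pullback.snd g g ≫ f) f ≫ pullback.fst g g)
      (pullback.fst (pullback.snd g g ≫ f) f ≫ pullback.snd g g)
      (pullback.snd (pullback.snd g g ≫ f) f) := by
  constructor
  · rw [Category.assoc, Category.assoc, pullback.condition]
  · rw [Category.assoc]; exact pullback.condition
  · intro X x₁ x₂ x₃ e₁ e₂
    refine ⟨pullback.lift (pullback.lift x₁ x₂ e₁) x₃ ?_, ⟨?_, ?_, ?_⟩, ?_⟩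
    · rw [← Category.assoc, pullback.lift_snd]; exact e₂
    · rw [← Category.assoc, pullback.lift_fst, pullback.lift_fst]
    · rw [← Category.assoc, pullback.lift_fst, pullback.lift_snd]
    · rw [pullback.lift_snd]
    · rintro u ⟨h1, h2, h3⟩
      apply pullback.hom_ext
      · apply pullback.hom_ext
        · rw [pullback.lift_fst, pullback.lift_fst, ← Category.assoc] at *
          exact h1
        · rw [pullback.lift_fst, pullback.lift_snd, ← Category.assoc] at *
          exact h2
      · rw [pullback.lift_snd]
        exact h3

end MalcevAux


namespace MalcevAux

open CategoryTheory CategoryTheory.Limits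

section SheafCore

variable {D : Type u} [SmallCategory D] {J : GrothendieckTopology D}
variable {Z A B : Sheaf J (Type u)} (f : Z ⟶ A) (g : Z ⟶ B)

theorem pointwise_inj (hjm : JointlyMonic f g) (x : Dᵒᵖ) (z z' : Z.val.obj x)
    (h1 : f.hom.app x z = f.hom.app x z') (h2 : g.hom.app x z = g.hom.app x z') :
    z = z' := by
  set adj := sheafificationAdjunction J (Type u) with hadj
  set Gr := sheafToPresheaf J (Type u) with hGr
  set Gl := presheafToSheaf J (Type u) with hGl
  set X₀ : Dᵒᵖ ⥤ Type u := yoneda.obj x.unop with hX₀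
  set u : X₀ ⟶ Z.val := yonedaEquiv.symm z with hu
  set v : X₀ ⟶ Z.val := yonedaEquiv.symm z' with hv
  have hcmpf : ∀ (w : Z.val.obj x), (yonedaEquiv.symm w : X₀ ⟶ Z.val) ≫ f.hom =
      yonedaEquiv.symm (f.hom.app x w) := fun w =>
    yonedaEquiv_symm_naturality_right x.unop f.hom w
  have hcmpg : ∀ (w : Z.val.obj x), (yonedaEquiv.symm w : X₀ ⟶ Z.val) ≫ g.hom =
      yonedaEquiv.symm (g.hom.app x w) := fun w =>
    yonedaEquiv_symm_naturality_right x.unop g.hom w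
  have huf : u ≫ Gr.map f = v ≫ Gr.map f := by
    show u ≫ f.hom = v ≫ f.hom
    rw [hu, hv, hcmpf, hcmpf, h1]
  have hug : u ≫ Gr.map g = v ≫ Gr.map g := by
    show u ≫ g.hom = v ≫ g.hom
    rw [hu, hv, hcmpg, hcmpg, h2]
  have key : (adj.homEquiv X₀ Z).symm u = (adj.homEquiv X₀ Z).symm v := by
    apply hjm
    · rw [← adj.homEquiv_naturality_right_symm, ← adj.homEquiv_naturality_right_symm, huf]
    · rw [← adj.homEquiv_naturality_right_symm, ← adj.homEquiv_naturality_right_symm, hug]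
  have huv : u = v := (adj.homEquiv X₀ Z).symm.injective key
  exact yonedaEquiv.symm.injective huv

theorem pointwise_difunc (hm : IsMalcevSpan f g) (x : Dᵒᵖ) :
    Difunc (f.hom.app x) (g.hom.app x) := by
  obtain ⟨p, hp1, hp2⟩ := hm.2 _ _ _ (tripleLimit_mk f g)
  intro z₁ z₂ z₃ h₁ h₂
  have sq1 : IsPullback ((pullback.fst g g).hom.app x) ((pullback.snd g g).hom.app x)
      (g.hom.app x) (g.hom.app x) :=
    ((IsPullback.of_hasPullback g g).map (sheafToPresheaf J (Type u))).map
      ((evaluation Dᵒᵖ (Type u)).obj x)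
  obtain ⟨w, hw1, hw2⟩ := pb_lift sq1 z₁ z₂ h₁
  have sq2 : IsPullback ((pullback.fst (pullback.snd g g ≫ f) f).hom.app x)
      ((pullback.snd (pullback.snd g g ≫ f) f).hom.app x)
      ((pullback.snd g g ≫ f).hom.app x) (f.hom.app x) :=
    ((IsPullback.of_hasPullback _ _).map (sheafToPresheaf J (Type u))).map
      ((evaluation Dᵒᵖ (Type u)).obj x)
  obtain ⟨q, hq1, hq2⟩ := pb_lift sq2 w z₃ (by
    show f.hom.app x ((pullback.snd g g).hom.app x w) = f.hom.app x z₃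
    rw [hw2]; exact h₂)
  refine ⟨p.hom.app x q, ?_, ?_⟩
  · have h := ConcreteCategory.congr_hom (NatTrans.congr_app (congrArg InducedCategory.Hom.hom hp1) x) q
    refine h.trans ?_
    show f.hom.app x ((pullback.fst g g).hom.app x
      ((pullback.fst (pullback.snd g g ≫ f) f).hom.app x q)) = _
    rw [hq1, hw1]
  · have h := ConcreteCategory.congr_hom (NatTrans.congr_app (congrArg InducedCategory.Hom.hom hp2) x) q
    refine h.trans ?_
    show g.hom.app x ((pullback.snd (pullback.snd g g ≫ f) f).hom.app x q) = _
    rw [hq2]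

theorem sheaf_core (hm : IsMalcevSpan f g) :
    ∃ c : PushoutCocone f g, Nonempty (IsColimit c) ∧ IsPullback f g c.inl c.inr ∧
      IsUniversalColimit c := by
  classical
  have hinj := pointwise_inj f g hm.1
  have hdif := pointwise_difunc f g hm
  set Gr := sheafToPresheaf J (Type u) with hGr
  set Gl := presheafToSheaf J (Type u) with hGl
  set adj := sheafificationAdjunction J (Type u) with hadj
  set s : Z.val ⟶ A.val := Gr.map f with hs
  set t : Z.val ⟶ B.val := Gr.map g with ht
  set c₀ : Cocone (span s t) := colimit.cocone (span s t) with hc₀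
  have key : ∀ x : Dᵒᵖ,
      IsUniversalColimit (((evaluation Dᵒᵖ (Type u)).obj x).mapCocone c₀) ∧
      IsPullback (s.app x) (t.app x) ((c₀.ι.app WalkingSpan.left).app x)
        ((c₀.ι.app WalkingSpan.right).app x) := by
    intro x
    have hU : IsUniversalColimit
        (PushoutCocone.mk (Types.Pushout.inl (s.app x) (t.app x))
          (Types.Pushout.inr (s.app x) (t.app x)) (typ_isPushout (s.app x) (t.app x)).w) :=
      isUniversal_of_pushoutStable (typ_isPushout _ _) (typ_stable (hdif x))
    set ev := (evaluation Dᵒᵖ (Type u)).obj x with hev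
    set d₁ := (Cocone.precompose (spanCompIso ev s t).hom).obj
        (PushoutCocone.mk (Types.Pushout.inl (s.app x) (t.app x))
          (Types.Pushout.inr (s.app x) (t.app x)) (typ_isPushout (s.app x) (t.app x)).w)
      with hd₁
    have hU₁ : IsUniversalColimit d₁ := hU.precompose_isIso _
    have hcol₁ : IsColimit d₁ :=
      (IsColimit.precomposeHomEquiv (spanCompIso ev s t) _).symm
        (Types.Pushout.isColimitCocone (s.app x) (t.app x))
    have hcol₂ : IsColimit (ev.mapCocone c₀) :=
      isColimitOfPreserves _ (colimit.isColimit _)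
    set e := IsColimit.coconePointUniqueUpToIso hcol₁ hcol₂ with he
    have hiso : d₁ ≅ ev.mapCocone c₀ :=
      Cocones.ext e (fun j => IsColimit.comp_coconePointUniqueUpToIso_hom hcol₁ hcol₂ j)
    constructor
    · exact hU₁.of_iso hiso
    · have base : IsPullback (s.app x) (t.app x) (Types.Pushout.inl (s.app x) (t.app x))
          (Types.Pushout.inr (s.app x) (t.app x)) :=
        typ_isPullback (fun z z' h1 h2 => hinj x z z' h1 h2) (hdif x)
      refine base.of_iso (Iso.refl _) (Iso.refl _) (Iso.refl _) e ?_ ?_ ?_ ?_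
      · simp
      · simp
      · exact IsColimit.comp_coconePointUniqueUpToIso_hom hcol₁ hcol₂ WalkingSpan.left
      · exact IsColimit.comp_coconePointUniqueUpToIso_hom hcol₁ hcol₂ WalkingSpan.right
  have hPshU : IsUniversalColimit c₀ :=
    isUniversalColimit_of_evaluation' _ _ (fun x => (key x).1)
  have hPshPB : IsPullback s t (c₀.ι.app WalkingSpan.left) (c₀.ι.app WalkingSpan.right) :=
    isPullback_of_evaluation
      ((c₀.w WalkingSpan.Hom.fst).trans (c₀.w WalkingSpan.Hom.snd).symm)
      (fun x => (key x).2)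
  haveI : IsIso adj.counit := NatIso.isIso_of_isIso_app _
  set c : Cocone (span f g ⋙ Gr) := (Cocone.precompose (spanCompIso Gr f g).hom).obj c₀
    with hc
  have hcU : IsUniversalColimit c := hPshU.precompose_isIso _
  have hmapU : IsUniversalColimit (Gl.mapCocone c) := hcU.map_reflective adj
  set γ : (span f g ⋙ Gr) ⋙ Gl ≅ span f g :=
    Functor.associator _ _ _ ≪≫ Functor.isoWhiskerLeft (span f g) (asIso adj.counit) ≪≫
      Functor.rightUnitor _ with hγ
  set csh : Cocone (span f g) := (Cocone.precompose γ.inv).obj (Gl.mapCocone c) with hcsh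
  have hUsh : IsUniversalColimit csh := hmapU.precompose_isIso _
  have hcolSh : IsColimit csh := hUsh.isColimit
  refine ⟨csh, ⟨hcolSh⟩, ?_, hUsh⟩
  have base := hPshPB.map Gl
  have h1 : c.ι.app WalkingSpan.left = c₀.ι.app WalkingSpan.left := by
    show (spanCompIso Gr f g).hom.app WalkingSpan.left ≫ c₀.ι.app WalkingSpan.left =
      c₀.ι.app WalkingSpan.left
    rw [spanCompIso_hom_app_left]; exact Category.id_comp _
  have h2 : c.ι.app WalkingSpan.right = c₀.ι.app WalkingSpan.right := by
    show (spanCompIso Gr f g).hom.app WalkingSpan.right ≫ c₀.ι.app WalkingSpan.right =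
      c₀.ι.app WalkingSpan.right
    rw [spanCompIso_hom_app_right]; exact Category.id_comp _
  have hinl : PushoutCocone.inl csh =
      inv (adj.counit.app A) ≫ Gl.map (c₀.ι.app WalkingSpan.left) := by
    show γ.inv.app WalkingSpan.left ≫ Gl.map (c.ι.app WalkingSpan.left) = _
    rw [h1]
    simp [hγ]
  have hinr : PushoutCocone.inr csh =
      inv (adj.counit.app B) ≫ Gl.map (c₀.ι.app WalkingSpan.right) := by
    show γ.inv.app WalkingSpan.right ≫ Gl.map (c.ι.app WalkingSpan.right) = _
    rw [h2]
    simp [hγ]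
  refine base.of_iso (asIso (adj.counit.app Z)) (asIso (adj.counit.app A))
    (asIso (adj.counit.app B)) (Iso.refl _) ?_ ?_ ?_ ?_
  · exact adj.counit.naturality f
  · exact adj.counit.naturality g
  · rw [hinl]; simp
  · rw [hinr]; simp

end SheafCore
end MalcevAux


/-- Every Grothendieck topos, i.e. every category of sheaves of sets on
a small site, is (finitely complete and) diexact. -/
theorem grothendieckTopos_diexact {D : Type u} [SmallCategory D]
    (J : GrothendieckTopology D) :
    HasFiniteLimits (Sheaf J (Type u)) ∧ Diexact (Sheaf J (Type u)) := by
  refine ⟨inferInstance, ?_⟩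
  intro Z A B f g hm
  obtain ⟨c, ⟨hcol⟩, hpb, huniv⟩ := MalcevAux.sheaf_core f g hm
  constructor
  · exact ⟨c.pt, c.inl, c.inr, IsPushout.of_isColimit hcol⟩
  · intro Dd h k hpk
    set e : c.pt ≅ Dd := hcol.coconePointUniqueUpToIso hpk.isColimit with he
    have hl : c.inl ≫ e.hom = h :=
      hcol.comp_coconePointUniqueUpToIso_hom hpk.isColimit WalkingSpan.left
    have hr : c.inr ≫ e.hom = k :=
      hcol.comp_coconePointUniqueUpToIso_hom hpk.isColimit WalkingSpan.right
    constructor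
    · refine MalcevAux.pushoutStable_of_isUniversal hpk.w (huniv.of_iso (Cocones.ext e ?_))
      rintro (_ | _ | _)
      · show c.ι.app WalkingSpan.zero ≫ e.hom = f ≫ h
        rw [PushoutCocone.condition_zero c]; exact (Category.assoc f c.inl e.hom).trans (congrArg (f ≫ ·) hl)
      · exact hl
      · exact hr
    · exact hpb.of_iso (Iso.refl _) (Iso.refl _) (Iso.refl _) e (by simp) (by simp)
        (by rw [hl]; simp) (by rw [hr]; simp)
end

section
/- In a finitely complete category, a jointly monic endospan (s : E → A, t : E → A) is an internal equivalence relation on A if and only if it is reflexive (the diagonal A → A × A factors through (s, t)) and is a Mal'cev span. -/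
open CategoryTheory CategoryTheory.Limits

universe v u

/-- In a finitely complete category, a jointly monic endospan
`(s, t) : E ⇉ A` is an internal equivalence relation if and only if it is reflexive and
is a Mal'cev span. -/
theorem equivRelation_iff_reflexive_malcev {C : Type u} [Category.{v} C]
    [HasFiniteLimits C] {E A : C} (s t : E ⟶ A) (hjm : JointlyMonic s t) :
    IsEquivRelation s t ↔
      ((∃ r : A ⟶ E, r ≫ s = 𝟙 A ∧ r ≫ t = 𝟙 A) ∧ IsMalcevSpan s t) := by
  constructor
  · rintro ⟨_, hrefl, ⟨σ, hσs, hσt⟩, ⟨τ, hτs, hτt⟩⟩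
    refine ⟨hrefl, hjm, ?_⟩
    intro P π₁ π₂ π₃ hT
    have h1 : π₁ ≫ t = (π₂ ≫ σ) ≫ s := by rw [Category.assoc, hσs, hT.w₁]
    set w₁ : P ⟶ pullback t s := pullback.lift π₁ (π₂ ≫ σ) h1 with hw₁
    set e' : P ⟶ E := w₁ ≫ τ with he'
    have he's : e' ≫ s = π₁ ≫ s := by
      rw [he', Category.assoc, hτs, ← Category.assoc, hw₁, pullback.lift_fst]
    have he't : e' ≫ t = π₃ ≫ s := by
      rw [he', Category.assoc, hτt, ← Category.assoc, hw₁, pullback.lift_snd,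
        Category.assoc, hσt, hT.w₂]
    refine ⟨pullback.lift e' π₃ he't ≫ τ, ?_, ?_⟩
    · rw [Category.assoc, hτs, ← Category.assoc, pullback.lift_fst, he's]
    · rw [Category.assoc, hτt, ← Category.assoc, pullback.lift_snd]
  · rintro ⟨⟨r, hrs, hrt⟩, _, hmal⟩
    set P := pullback (pullback.snd t t ≫ s) s with hP
    set π₁ : P ⟶ E := pullback.fst _ _ ≫ pullback.fst t t with hπ₁
    set π₂ : P ⟶ E := pullback.fst _ _ ≫ pullback.snd t t with hπ₂
    set π₃ : P ⟶ E := pullback.snd _ _ with hπ₃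
    have hT : IsTripleLimit s t π₁ π₂ π₃ := by
      refine ⟨?_, ?_, ?_⟩
      · rw [hπ₁, hπ₂, Category.assoc, Category.assoc, pullback.condition]
      · rw [hπ₂, hπ₃, Category.assoc, ← pullback.condition]
      · intro X x₁ x₂ x₃ h₁ h₂
        refine ⟨pullback.lift (pullback.lift x₁ x₂ h₁) x₃
          (by rw [← Category.assoc, pullback.lift_snd, h₂]), ⟨?_, ?_, ?_⟩, ?_⟩
        · rw [hπ₁, ← Category.assoc, pullback.lift_fst, pullback.lift_fst]
        · rw [hπ₂, ← Category.assoc, pullback.lift_fst, pullback.lift_snd]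
        · rw [hπ₃, pullback.lift_snd]
        · intro u ⟨hu₁, hu₂, hu₃⟩
          apply pullback.hom_ext
          · apply pullback.hom_ext
            · rw [pullback.lift_fst, Category.assoc, pullback.lift_fst, ← hu₁, hπ₁]
            · rw [pullback.lift_fst, Category.assoc, pullback.lift_snd, ← hu₂, hπ₂]
          · rw [pullback.lift_snd, ← hu₃, hπ₃]
    obtain ⟨p, hps, hpt⟩ := hmal π₁ π₂ π₃ hT
    -- symmetry
    obtain ⟨uσ, ⟨hu1, hu2, hu3⟩, -⟩ := hT.lift (t ≫ r) (𝟙 E) (s ≫ r)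
      (by rw [Category.assoc, hrt, Category.comp_id, Category.id_comp])
      (by rw [Category.id_comp, Category.assoc, hrs, Category.comp_id])
    -- transitivity
    obtain ⟨uτ, ⟨hv1, hv2, hv3⟩, -⟩ := hT.lift (pullback.fst t s)
      (pullback.fst t s ≫ t ≫ r) (pullback.snd t s)
      (by rw [Category.assoc, Category.assoc, hrt, Category.comp_id])
      (by rw [Category.assoc, Category.assoc, hrs, Category.comp_id, pullback.condition])
    refine ⟨hjm, ⟨r, hrs, hrt⟩, ⟨uσ ≫ p, ?_, ?_⟩, ⟨uτ ≫ p, ?_, ?_⟩⟩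
    · rw [Category.assoc, hps, ← Category.assoc, hu1, Category.assoc, hrs,
        Category.comp_id]
    · rw [Category.assoc, hpt, ← Category.assoc, hu3, Category.assoc, hrt,
        Category.comp_id]
    · rw [Category.assoc, hps, ← Category.assoc, hv1]
    · rw [Category.assoc, hpt, ← Category.assoc, hv3]
end

section
/- The category of pointed sets is diexact. -/
open CategoryTheory CategoryTheory.Limits

universe v u

namespace PointedDiexact

open Pointed

/-! ### Element-level tools for `Pointed` -/

/-- Evaluate a hom equality at an element. -/
theorem hcongr {X Y : Pointed.{u}} {f g : X ⟶ Y} (h : f = g) (x : X.X) :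
    f.toFun x = g.toFun x :=
  congrFun (congrArg Pointed.Hom.toFun h) x

theorem comp_app {X Y W : Pointed.{u}} (f : X ⟶ Y) (g : Y ⟶ W) (x : X.X) :
    (f ≫ g).toFun x = g.toFun (f.toFun x) := rfl

/-- The two-element pointed set. -/
abbrev E2 : Pointed.{u} := Pointed.of (none : Option PUnit.{u + 1})

/-- The morphism from the two-element pointed set picking out an element. -/
def el {X : Pointed.{u}} (x : X.X) : E2 ⟶ X :=
  ⟨fun o => Option.elim o X.point fun _ => x, rfl⟩

@[simp] theorem el_apply {X : Pointed.{u}} (x : X.X) :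
    (el x).toFun (some PUnit.unit) = x := rfl

theorem el_comp {X Y : Pointed.{u}} (x : X.X) (f : X ⟶ Y) :
    el x ≫ f = el (f.toFun x) := by
  apply Pointed.Hom.ext
  funext o
  cases o with
  | none => exact f.map_point
  | some u => rfl

theorem el_inj {X : Pointed.{u}} {x y : X.X} (h : el x = el y) : x = y :=
  hcongr h (some PUnit.unit)

/-- Elementwise consequence of joint monicity. -/
theorem jm_el {Z A B : Pointed.{u}} {f : Z ⟶ A} {g : Z ⟶ B} (jm : JointlyMonic f g)
    {z z' : Z.X} (h1 : f.toFun z = f.toFun z') (h2 : g.toFun z = g.toFun z') : z = z' := by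
  apply el_inj
  apply jm
  · rw [el_comp, el_comp, h1]
  · rw [el_comp, el_comp, h2]

/-- Elementwise surjectivity of a pullback square. -/
theorem pb_lift {P X Y W : Pointed.{u}} {p₁ : P ⟶ X} {p₂ : P ⟶ Y} {f : X ⟶ W} {g : Y ⟶ W}
    (H : IsPullback p₁ p₂ f g) (x : X.X) (y : Y.X) (hxy : f.toFun x = g.toFun y) :
    ∃ p : P.X, p₁.toFun p = x ∧ p₂.toFun p = y := by
  have hcomm : el x ≫ f = el y ≫ g := by rw [el_comp, el_comp, hxy]
  refine ⟨(H.lift (el x) (el y) hcomm).toFun (some PUnit.unit), ?_, ?_⟩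
  · exact hcongr (H.lift_fst (el x) (el y) hcomm) (some PUnit.unit)
  · exact hcongr (H.lift_snd (el x) (el y) hcomm) (some PUnit.unit)

/-- Elementwise joint injectivity of a pullback square. -/
theorem pb_inj {P X Y W : Pointed.{u}} {p₁ : P ⟶ X} {p₂ : P ⟶ Y} {f : X ⟶ W} {g : Y ⟶ W}
    (H : IsPullback p₁ p₂ f g) {p q : P.X}
    (h1 : p₁.toFun p = p₁.toFun q) (h2 : p₂.toFun p = p₂.toFun q) : p = q := by
  apply el_inj
  apply H.hom_ext
  · rw [el_comp, el_comp, h1]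
  · rw [el_comp, el_comp, h2]

/-- Construct an `IsPullback` in `Pointed` from elementwise data. -/
theorem mkIsPullback {Z A B D : Pointed.{u}} {f : Z ⟶ A} {g : Z ⟶ B} {h : A ⟶ D} {k : B ⟶ D}
    (comm : f ≫ h = g ≫ k)
    (inj : ∀ z z' : Z.X, f.toFun z = f.toFun z' → g.toFun z = g.toFun z' → z = z')
    (ex : ∀ (a : A.X) (b : B.X), h.toFun a = k.toFun b →
      ∃ z : Z.X, f.toFun z = a ∧ g.toFun z = b) :
    IsPullback f g h k := by
  choose L0 hL1 hL2 using fun (s : PullbackCone h k) (t : s.pt.X) =>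
    ex (s.fst.toFun t) (s.snd.toFun t) (hcongr s.condition t)
  have hpt : ∀ s : PullbackCone h k, L0 s s.pt.point = Z.point := by
    intro s
    refine inj _ _ ?_ ?_
    · rw [hL1 s, s.fst.map_point, f.map_point]
    · rw [hL2 s, s.snd.map_point, g.map_point]
  refine IsPullback.of_isLimit' ⟨comm⟩ (PullbackCone.IsLimit.mk comm
    (fun s => ⟨L0 s, hpt s⟩) (fun s => ?_) (fun s => ?_) (fun s m hm1 hm2 => ?_))
  · exact Pointed.Hom.ext (funext fun t => hL1 s t)
  · exact Pointed.Hom.ext (funext fun t => hL2 s t)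
  · refine Pointed.Hom.ext (funext fun t => ?_)
    refine inj _ _ ?_ ?_
    · rw [hL1 s t]; exact hcongr hm1 t
    · rw [hL2 s t]; exact hcongr hm2 t

/-- Construct an `IsPushout` in `Pointed` from elementwise data. -/
theorem mkIsPushout {Z A B D : Pointed.{u}} {f : Z ⟶ A} {g : Z ⟶ B} {h : A ⟶ D} {k : B ⟶ D}
    (comm : f ≫ h = g ≫ k)
    (surj : ∀ d : D.X, (∃ a, h.toFun a = d) ∨ (∃ b, k.toFun b = d))
    (hh : ∀ a a' : A.X, h.toFun a = h.toFun a' →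
      a = a' ∨ ∃ z z' : Z.X, f.toFun z = a ∧ f.toFun z' = a' ∧ g.toFun z = g.toFun z')
    (kk : ∀ b b' : B.X, k.toFun b = k.toFun b' →
      b = b' ∨ ∃ z z' : Z.X, g.toFun z = b ∧ g.toFun z' = b' ∧ f.toFun z = f.toFun z')
    (hk : ∀ (a : A.X) (b : B.X), h.toFun a = k.toFun b →
      ∃ z : Z.X, f.toFun z = a ∧ g.toFun z = b) :
    IsPushout f g h k := by
  -- For each cocone `s`, any two "names" of an element of `D` give the same value.
  have key : ∀ (s : PushoutCocone f g) (d : D.X), ∃ t : s.pt.X,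
      (∀ a : A.X, h.toFun a = d → s.inl.toFun a = t) ∧
      (∀ b : B.X, k.toFun b = d → s.inr.toFun b = t) := by
    intro s d
    have scond : ∀ z : Z.X, s.inl.toFun (f.toFun z) = s.inr.toFun (g.toFun z) :=
      fun z => hcongr s.condition z
    have eqhh : ∀ a a' : A.X, h.toFun a = h.toFun a' → s.inl.toFun a = s.inl.toFun a' := by
      intro a a' hd
      rcases hh a a' hd with rfl | ⟨z, z', hz, hz', hg⟩
      · rfl
      · rw [← hz, ← hz', scond z, scond z', hg]
    have eqkk : ∀ b b' : B.X, k.toFun b = k.toFun b' → s.inr.toFun b = s.inr.toFun b' := by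
      intro b b' hd
      rcases kk b b' hd with rfl | ⟨z, z', hz, hz', hf⟩
      · rfl
      · rw [← hz, ← hz', ← scond z, ← scond z', hf]
    have eqhk : ∀ (a : A.X) (b : B.X), h.toFun a = k.toFun b →
        s.inl.toFun a = s.inr.toFun b := by
      intro a b hd
      obtain ⟨z, hz, hz'⟩ := hk a b hd
      rw [← hz, ← hz', scond z]
    rcases surj d with ⟨a, ha⟩ | ⟨b, hb⟩
    · exact ⟨s.inl.toFun a, fun a' ha' => eqhh a' a (ha'.trans ha.symm),
        fun b hb => (eqhk a b (ha.trans hb.symm)).symm⟩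
    · exact ⟨s.inr.toFun b, fun a ha => eqhk a b (ha.trans hb.symm),
        fun b' hb' => eqkk b' b (hb'.trans hb.symm)⟩
  choose T0 hT1 hT2 using key
  have hpt : ∀ s : PushoutCocone f g, T0 s D.point = s.pt.point := by
    intro s
    rw [← hT1 s D.point A.point h.map_point, s.inl.map_point]
  refine IsPushout.of_isColimit' ⟨comm⟩ (PushoutCocone.IsColimit.mk comm
    (fun s => ⟨T0 s, hpt s⟩) (fun s => ?_) (fun s => ?_) (fun s m hm1 hm2 => ?_))
  · exact Pointed.Hom.ext (funext fun a => (hT1 s (h.toFun a) a rfl).symm)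
  · exact Pointed.Hom.ext (funext fun b => (hT2 s (k.toFun b) b rfl).symm)
  · refine Pointed.Hom.ext (funext fun d => ?_)
    rcases surj d with ⟨a, ha⟩ | ⟨b, hb⟩
    · rw [← ha]
      exact (hcongr hm1 a).trans (hT1 s (h.toFun a) a rfl)
    · rw [← hb]
      exact (hcongr hm2 b).trans (hT2 s (k.toFun b) b rfl)

/-! ### Finite limits in `Pointed` -/

/-- The limit cone of a small diagram of pointed sets. -/
@[simps]
def limitCone {J : Type} [SmallCategory J] (F : J ⥤ Pointed.{u}) : Cone F where
  pt := ⟨{ s : ∀ j : J, (F.obj j).X // ∀ {j j' : J} (φ : j ⟶ j'), (F.map φ).toFun (s j) = s j' },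
    ⟨fun j => (F.obj j).point, fun φ => (F.map φ).map_point⟩⟩
  π :=
    { app := fun j => ⟨fun s => s.1 j, rfl⟩
      naturality := fun j j' φ => by
        apply Pointed.Hom.ext
        funext s
        exact (s.2 φ).symm }

/-- The limit cone is a limit. -/
def limitConeIsLimit {J : Type} [SmallCategory J] (F : J ⥤ Pointed.{u}) :
    IsLimit (limitCone F) where
  lift s :=
    ⟨fun x => ⟨fun j => (s.π.app j).toFun x, fun {j j'} φ => hcongr (s.w φ) x⟩,
      Subtype.ext (funext fun j => (s.π.app j).map_point)⟩
  fac s j := rfl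
  uniq s m hm :=
    Pointed.Hom.ext (funext fun x => Subtype.ext (funext fun j => hcongr (hm j) x))

theorem pointedHasFiniteLimits : HasFiniteLimits Pointed.{u} := by
  constructor
  intro J _ _
  constructor
  intro F
  exact HasLimit.mk ⟨limitCone F, limitConeIsLimit F⟩

/-! ### The triple limit and difunctionality -/

section Span

variable {Z A B : Pointed.{u}} (f : Z ⟶ A) (g : Z ⟶ B)

/-- The relation on `A × B` determined by the span. -/
def Rel (a : A.X) (b : B.X) : Prop := ∃ z : Z.X, f.toFun z = a ∧ g.toFun z = b

/-- The concrete triple limit `Z ×_B Z ×_A Z`. -/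
def TL : Pointed.{u} :=
  ⟨{ t : Z.X × Z.X × Z.X // g.toFun t.1 = g.toFun t.2.1 ∧ f.toFun t.2.1 = f.toFun t.2.2 },
    ⟨(Z.point, Z.point, Z.point), ⟨rfl, rfl⟩⟩⟩

/-- First projection of the triple limit. -/
def tlπ₁ : TL f g ⟶ Z := ⟨fun t => t.1.1, rfl⟩
/-- Second projection of the triple limit. -/
def tlπ₂ : TL f g ⟶ Z := ⟨fun t => t.1.2.1, rfl⟩
/-- Third projection of the triple limit. -/
def tlπ₃ : TL f g ⟶ Z := ⟨fun t => t.1.2.2, rfl⟩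

theorem tl_isTripleLimit : IsTripleLimit f g (tlπ₁ f g) (tlπ₂ f g) (tlπ₃ f g) := by
  constructor
  · exact Pointed.Hom.ext (funext fun t => t.2.1)
  · exact Pointed.Hom.ext (funext fun t => t.2.2)
  · intro X x₁ x₂ x₃ h₁ h₂
    refine ⟨⟨fun t => ⟨(x₁.toFun t, x₂.toFun t, x₃.toFun t), ⟨hcongr h₁ t, hcongr h₂ t⟩⟩, ?_⟩,
      ⟨rfl, rfl, rfl⟩, ?_⟩
    · apply Subtype.ext
      show (x₁.toFun X.point, x₂.toFun X.point, x₃.toFun X.point) = _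
      rw [x₁.map_point, x₂.map_point, x₃.map_point]
      rfl
    · rintro u ⟨e₁, e₂, e₃⟩
      refine Pointed.Hom.ext (funext fun t => Subtype.ext ?_)
      exact Prod.ext (hcongr e₁ t) (Prod.ext (hcongr e₂ t) (hcongr e₃ t))

/-- Difunctionality of the relation, from the Mal'cev property. -/
theorem dif_of_malcev
    (mal : ∀ ⦃P : Pointed.{u}⦄ (π₁ π₂ π₃ : P ⟶ Z), IsTripleLimit f g π₁ π₂ π₃ →
      ∃ p : P ⟶ Z, p ≫ f = π₁ ≫ f ∧ p ≫ g = π₃ ≫ g)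
    {a : A.X} {b b' : B.X} {a' : A.X}
    (h1 : Rel f g a b') (h2 : Rel f g a' b') (h3 : Rel f g a' b) : Rel f g a b := by
  obtain ⟨p, hpf, hpg⟩ := mal _ _ _ (tl_isTripleLimit f g)
  obtain ⟨z₁, hz₁f, hz₁g⟩ := h1
  obtain ⟨z₂, hz₂f, hz₂g⟩ := h2
  obtain ⟨z₃, hz₃f, hz₃g⟩ := h3
  refine ⟨p.toFun ⟨(z₁, z₂, z₃), ⟨hz₁g.trans hz₂g.symm, hz₂f.trans hz₃f.symm⟩⟩, ?_, ?_⟩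
  · exact (hcongr hpf _).trans hz₁f
  · exact (hcongr hpg _).trans hz₃g

/-! ### The concrete pushout -/

/-- The generating relation for the pushout quotient. -/
def S : (A.X ⊕ B.X) → (A.X ⊕ B.X) → Prop := fun x y =>
  ∃ z : Z.X, x = Sum.inl (f.toFun z) ∧ y = Sum.inr (g.toFun z)

/-- The concrete pushout object. -/
def D0 : Pointed.{u} := ⟨Quot (S f g), Quot.mk _ (Sum.inl A.point)⟩

/-- First pushout injection. -/
def h0 : A ⟶ D0 f g := ⟨fun a => Quot.mk _ (Sum.inl a), rfl⟩

/-- Second pushout injection. -/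
def k0 : B ⟶ D0 f g :=
  ⟨fun b => Quot.mk _ (Sum.inr b),
    (Quot.sound ⟨Z.point, by rw [f.map_point], by rw [g.map_point]⟩).symm⟩

theorem comm0 : f ≫ h0 f g = g ≫ k0 f g :=
  Pointed.Hom.ext (funext fun z => Quot.sound ⟨z, rfl, rfl⟩)

/-- The explicit description of the equivalence relation generated by `S`. -/
def Erel : (A.X ⊕ B.X) → (A.X ⊕ B.X) → Prop
  | .inl a, .inl a' => a = a' ∨ ∃ b, Rel f g a b ∧ Rel f g a' b
  | .inl a, .inr b => Rel f g a b
  | .inr b, .inl a => Rel f g a b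
  | .inr b, .inr b' => b = b' ∨ ∃ a, Rel f g a b ∧ Rel f g a b'

variable {f g}

theorem erel_of_eqvGen
    (dif : ∀ {a : A.X} {b b' : B.X} {a' : A.X},
      Rel f g a b' → Rel f g a' b' → Rel f g a' b → Rel f g a b)
    {x y : A.X ⊕ B.X} (h : Relation.EqvGen (S f g) x y) : Erel f g x y := by
  induction h with
  | rel x y hxy => obtain ⟨z, rfl, rfl⟩ := hxy; exact ⟨z, rfl, rfl⟩
  | refl x => cases x <;> exact Or.inl rfl
  | symm x y hxy ih =>
    cases x <;> cases y
    · rcases ih with rfl | ⟨b, hb1, hb2⟩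
      · exact Or.inl rfl
      · exact Or.inr ⟨b, hb2, hb1⟩
    · exact ih
    · exact ih
    · rcases ih with rfl | ⟨a, ha1, ha2⟩
      · exact Or.inl rfl
      · exact Or.inr ⟨a, ha2, ha1⟩
  | trans x y z hxy hyz ih1 ih2 =>
    cases x <;> cases y <;> cases z
    · rcases ih1 with rfl | ⟨b₀, h1, h2⟩
      · exact ih2
      · rcases ih2 with rfl | ⟨b₁, h3, h4⟩
        · exact Or.inr ⟨b₀, h1, h2⟩
        · exact Or.inr ⟨b₁, dif h1 h2 h3, h4⟩
    · rcases ih1 with rfl | ⟨b₀, h1, h2⟩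
      · exact ih2
      · exact dif h1 h2 ih2
    · exact Or.inr ⟨_, ih1, ih2⟩
    · rcases ih2 with rfl | ⟨a₁, h3, h4⟩
      · exact ih1
      · exact dif ih1 h3 h4
    · rcases ih2 with rfl | ⟨b₁, h3, h4⟩
      · exact ih1
      · exact dif h4 h3 ih1
    · exact Or.inr ⟨_, ih1, ih2⟩
    · rcases ih1 with rfl | ⟨a₁, h1, h2⟩
      · exact ih2
      · exact dif ih2 h2 h1
    · rcases ih1 with rfl | ⟨a₀, h1, h2⟩
      · exact ih2
      · rcases ih2 with rfl | ⟨a₁, h3, h4⟩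
        · exact Or.inr ⟨a₀, h1, h2⟩
        · exact Or.inr ⟨a₁, dif h3 h2 h1, h4⟩
  

/-- Difunctionality of the span relation. -/
def Difunctional {Z A B : Pointed.{u}} (f : Z ⟶ A) (g : Z ⟶ B) : Prop :=
  ∀ ⦃a : A.X⦄ ⦃b b' : B.X⦄ ⦃a' : A.X⦄,
    Rel f g a b' → Rel f g a' b' → Rel f g a' b → Rel f g a b

theorem fact_surj0 : ∀ d : (D0 f g).X,
    (∃ a, (h0 f g).toFun a = d) ∨ ∃ b, (k0 f g).toFun b = d := by
  intro d
  induction d using Quot.ind with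
  | _ x =>
    cases x with
    | inl a => exact Or.inl ⟨a, rfl⟩
    | inr b => exact Or.inr ⟨b, rfl⟩

theorem fact_hh0 (dif : Difunctional f g) :
    ∀ a a' : A.X, (h0 f g).toFun a = (h0 f g).toFun a' →
      a = a' ∨ ∃ z z' : Z.X, f.toFun z = a ∧ f.toFun z' = a' ∧ g.toFun z = g.toFun z' := by
  intro a a' hd
  have h2 : a = a' ∨ ∃ b, Rel f g a b ∧ Rel f g a' b :=
    erel_of_eqvGen (fun h1 h2 h3 => dif h1 h2 h3) (Quot.eq.mp hd)
  rcases h2 with rfl | ⟨b, ⟨z, hz1, hz2⟩, ⟨z', hz1', hz2'⟩⟩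
  · exact Or.inl rfl
  · exact Or.inr ⟨z, z', hz1, hz1', hz2.trans hz2'.symm⟩

theorem fact_kk0 (dif : Difunctional f g) :
    ∀ b b' : B.X, (k0 f g).toFun b = (k0 f g).toFun b' →
      b = b' ∨ ∃ z z' : Z.X, g.toFun z = b ∧ g.toFun z' = b' ∧ f.toFun z = f.toFun z' := by
  intro b b' hd
  have h2 : b = b' ∨ ∃ a, Rel f g a b ∧ Rel f g a b' :=
    erel_of_eqvGen (fun h1 h2 h3 => dif h1 h2 h3) (Quot.eq.mp hd)
  rcases h2 with rfl | ⟨a, ⟨z, hz1, hz2⟩, ⟨z', hz1', hz2'⟩⟩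
  · exact Or.inl rfl
  · exact Or.inr ⟨z, z', hz2, hz2', hz1.trans hz1'.symm⟩

theorem fact_hk0 (dif : Difunctional f g) :
    ∀ (a : A.X) (b : B.X), (h0 f g).toFun a = (k0 f g).toFun b →
      ∃ z : Z.X, f.toFun z = a ∧ g.toFun z = b := by
  intro a b hd
  have h2 : Rel f g a b := erel_of_eqvGen (fun h1 h2 h3 => dif h1 h2 h3) (Quot.eq.mp hd)
  exact h2

theorem psh0 (dif : Difunctional f g) : IsPushout f g (h0 f g) (k0 f g) :=
  mkIsPushout (comm0 f g) fact_surj0 (fact_hh0 dif) (fact_kk0 dif) (fact_hk0 dif)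

/-- Transfer the elementwise facts about the concrete pushout to an arbitrary pushout. -/
theorem transfer (dif : Difunctional f g) {D : Pointed.{u}} {h : A ⟶ D} {k : B ⟶ D}
    (hp : IsPushout f g h k) :
    (∀ d : D.X, (∃ a, h.toFun a = d) ∨ ∃ b, k.toFun b = d) ∧
    (∀ a a' : A.X, h.toFun a = h.toFun a' →
      a = a' ∨ ∃ z z' : Z.X, f.toFun z = a ∧ f.toFun z' = a' ∧ g.toFun z = g.toFun z') ∧
    (∀ b b' : B.X, k.toFun b = k.toFun b' →
      b = b' ∨ ∃ z z' : Z.X, g.toFun z = b ∧ g.toFun z' = b' ∧ f.toFun z = f.toFun z') ∧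
    (∀ (a : A.X) (b : B.X), h.toFun a = k.toFun b →
      ∃ z : Z.X, f.toFun z = a ∧ g.toFun z = b) := by
  obtain ⟨e, he, ke⟩ : ∃ e : D ≅ D0 f g, h ≫ e.hom = h0 f g ∧ k ≫ e.hom = k0 f g :=
    ⟨hp.isoIsPushout _ _ (psh0 dif), hp.inl_isoIsPushout_hom _ _ (psh0 dif),
      hp.inr_isoIsPushout_hom _ _ (psh0 dif)⟩
  have einj : ∀ x y : D.X, e.hom.toFun x = e.hom.toFun y → x = y := by
    intro x y hxy
    have h1 : e.inv.toFun (e.hom.toFun x) = x := hcongr e.hom_inv_id x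
    have h2 : e.inv.toFun (e.hom.toFun y) = y := hcongr e.hom_inv_id y
    rw [← h1, ← h2, hxy]
  have he' : ∀ a : A.X, e.hom.toFun (h.toFun a) = (h0 f g).toFun a := fun a => hcongr he a
  have ke' : ∀ b : B.X, e.hom.toFun (k.toFun b) = (k0 f g).toFun b := fun b => hcongr ke b
  refine ⟨?_, ?_, ?_, ?_⟩
  · intro d
    rcases fact_surj0 (e.hom.toFun d) with ⟨a, ha⟩ | ⟨b, hb⟩
    · exact Or.inl ⟨a, einj _ _ ((he' a).trans ha)⟩
    · exact Or.inr ⟨b, einj _ _ ((ke' b).trans hb)⟩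
  · intro a a' hd
    exact fact_hh0 dif a a'
      ((he' a).symm.trans ((congrArg e.hom.toFun hd).trans (he' a')))
  · intro b b' hd
    exact fact_kk0 dif b b'
      ((ke' b).symm.trans ((congrArg e.hom.toFun hd).trans (ke' b')))
  · intro a b hd
    exact fact_hk0 dif a b
      ((he' a).symm.trans ((congrArg e.hom.toFun hd).trans (ke' b)))

end Span

end PointedDiexact

open PointedDiexact in
/-- The category of pointed sets is (finitely complete and) diexact. -/
theorem pointed_diexact : HasFiniteLimits Pointed ∧ Diexact Pointed := by
  refine ⟨pointedHasFiniteLimits, ?_⟩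
  intro Z A B f g hms
  obtain ⟨jm, mal⟩ := hms
  have dif : Difunctional f g := fun _ _ _ _ h1 h2 h3 => dif_of_malcev f g mal h1 h2 h3
  have jme : ∀ z z' : Z.X, f.toFun z = f.toFun z' → g.toFun z = g.toFun z' → z = z' :=
    fun z z' => jm_el jm
  refine ⟨⟨D0 f g, h0 f g, k0 f g, psh0 dif⟩, ?_⟩
  intro D h k hp
  obtain ⟨surj, hh, kk, hk⟩ := transfer dif hp
  constructor
  · -- stability under pullback
    intro Z' A' B' D' f' g' h' k' αZ αA αB αD pbf pbg pbh pbk wtop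
    have wf : ∀ z', αA.toFun (f'.toFun z') = f.toFun (αZ.toFun z') := fun z' => hcongr pbf.w z'
    have wg : ∀ z', αB.toFun (g'.toFun z') = g.toFun (αZ.toFun z') := fun z' => hcongr pbg.w z'
    have wh : ∀ a', αD.toFun (h'.toFun a') = h.toFun (αA.toFun a') := fun a' => hcongr pbh.w a'
    have wk : ∀ b', αD.toFun (k'.toFun b') = k.toFun (αB.toFun b') := fun b' => hcongr pbk.w b'
    have wt : ∀ z', h'.toFun (f'.toFun z') = k'.toFun (g'.toFun z') := fun z' => hcongr wtop z'
    have wb : ∀ z, h.toFun (f.toFun z) = k.toFun (g.toFun z) := fun z => hcongr hp.w z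
    refine mkIsPushout wtop ?_ ?_ ?_ ?_
    · intro d'
      rcases surj (αD.toFun d') with ⟨a, ha⟩ | ⟨b, hb⟩
      · obtain ⟨a', ha'1, _⟩ := pb_lift pbh d' a ha.symm
        exact Or.inl ⟨a', ha'1⟩
      · obtain ⟨b', hb'1, _⟩ := pb_lift pbk d' b hb.symm
        exact Or.inr ⟨b', hb'1⟩
    · intro a₁' a₂' hd
      rcases hh (αA.toFun a₁') (αA.toFun a₂')
          ((wh a₁').symm.trans ((congrArg αD.toFun hd).trans (wh a₂'))) with
        heq | ⟨z₁, z₂, hz₁, hz₂, hgz⟩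
      · exact Or.inl (pb_inj pbh hd heq)
      · have hkb : αD.toFun (h'.toFun a₁') = k.toFun (g.toFun z₁) := by
          rw [wh a₁', ← hz₁, wb z₁]
        obtain ⟨b', hb'1, hb'2⟩ := pb_lift pbk (h'.toFun a₁') (g.toFun z₁) hkb
        obtain ⟨z₁', hz₁'1, hz₁'2⟩ := pb_lift pbg b' z₁ hb'2
        obtain ⟨z₂', hz₂'1, hz₂'2⟩ := pb_lift pbg b' z₂ (hb'2.trans hgz)
        refine Or.inr ⟨z₁', z₂', ?_, ?_, ?_⟩
        · refine pb_inj pbh ?_ ?_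
          · rw [wt z₁', hz₁'1, hb'1]
          · rw [wf z₁', hz₁'2, hz₁]
        · refine pb_inj pbh ?_ ?_
          · rw [wt z₂', hz₂'1, hb'1, hd]
          · rw [wf z₂', hz₂'2, hz₂]
        · rw [hz₁'1, hz₂'1]
    · intro b₁' b₂' hd
      rcases kk (αB.toFun b₁') (αB.toFun b₂')
          ((wk b₁').symm.trans ((congrArg αD.toFun hd).trans (wk b₂'))) with
        heq | ⟨z₁, z₂, hz₁, hz₂, hfz⟩
      · exact Or.inl (pb_inj pbk hd heq)
      · have hha : αD.toFun (k'.toFun b₁') = h.toFun (f.toFun z₁) := by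
          rw [wk b₁', ← hz₁, ← wb z₁]
        obtain ⟨a', ha'1, ha'2⟩ := pb_lift pbh (k'.toFun b₁') (f.toFun z₁) hha
        obtain ⟨z₁', hz₁'1, hz₁'2⟩ := pb_lift pbf a' z₁ ha'2
        obtain ⟨z₂', hz₂'1, hz₂'2⟩ := pb_lift pbf a' z₂ (ha'2.trans hfz)
        refine Or.inr ⟨z₁', z₂', ?_, ?_, ?_⟩
        · refine pb_inj pbk ?_ ?_
          · rw [← wt z₁', hz₁'1, ha'1]
          · rw [wg z₁', hz₁'2, hz₁]
        · refine pb_inj pbk ?_ ?_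
          · rw [← wt z₂', hz₂'1, ha'1, hd]
          · rw [wg z₂', hz₂'2, hz₂]
        · rw [hz₁'1, hz₂'1]
    · intro a' b' hd
      obtain ⟨z, hz1, hz2⟩ := hk (αA.toFun a') (αB.toFun b')
        ((wh a').symm.trans ((congrArg αD.toFun hd).trans (wk b')))
      obtain ⟨z', hz'1, hz'2⟩ := pb_lift pbf a' z hz1.symm
      refine ⟨z', hz'1, ?_⟩
      refine pb_inj pbk ?_ ?_
      · rw [← wt z', hz'1, hd]
      · rw [wg z', hz'2, hz2]
  · exact mkIsPullback hp.w jme hk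
end

section
/- If C is a diexact category, then for every object A of C the coslice category A/C (of objects under A) is diexact. -/
open CategoryTheory CategoryTheory.Limits

universe v u

namespace CosliceAux

variable {C : Type u} [Category.{v} C] {A : C}

lemma pushout_under {Z X Y W : Under A} {f : Z ⟶ X} {g : Z ⟶ Y} {h : X ⟶ W} {k : Y ⟶ W}
    (H : IsPushout f.right g.right h.right k.right) : IsPushout f g h k := by
  have comm : f ≫ h = g ≫ k := by
    ext
    simpa using H.w
  have hc := IsPushout.of_isColimit (PushoutCocone.IsColimit.mk comm
    (fun s => Under.homMk
      (H.desc s.inl.right s.inr.right (by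
        have := congrArg (fun q => CommaMorphism.right q) s.condition
        simpa using this))
      (by
        have h1 : W.hom = X.hom ≫ h.right := (Under.w h).symm
        rw [h1, Category.assoc, H.inl_desc, Under.w s.inl]))
    (fun s => by
      ext
      simp)
    (fun s => by
      ext
      simp)
    (fun s m hm1 hm2 => by
      ext
      refine H.hom_ext ?_ ?_ <;> simp
      · have := congrArg (fun q => CommaMorphism.right q) hm1
        simpa using this
      · have := congrArg (fun q => CommaMorphism.right q) hm2
        simpa using this))
  exact hc

lemma pushout_forget {Z X Y W : Under A} {f : Z ⟶ X} {g : Z ⟶ Y} {h : X ⟶ W} {k : Y ⟶ W}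
    (H : IsPushout f g h k) : IsPushout f.right g.right h.right k.right := by
  have comm : f.right ≫ h.right = g.right ≫ k.right := by
    have := congrArg (fun q => CommaMorphism.right q) H.w
    simpa using this
  have key : ∀ s : PushoutCocone f.right g.right,
      ∃ d : W.right ⟶ s.pt, h.right ≫ d = s.inl ∧ k.right ≫ d = s.inr ∧
        ∀ m : W.right ⟶ s.pt, h.right ≫ m = s.inl → k.right ≫ m = s.inr → m = d := by
    intro s
    have hc : Y.hom ≫ s.inr = X.hom ≫ s.inl := by
      rw [← Under.w g, ← Under.w f, Category.assoc, Category.assoc, s.condition]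
    let b : X ⟶ Under.mk (X.hom ≫ s.inl) := Under.homMk s.inl rfl
    let c : Y ⟶ Under.mk (X.hom ≫ s.inl) := Under.homMk s.inr hc
    have fb : f ≫ b = g ≫ c := by
      ext
      simpa [b, c] using s.condition
    refine ⟨(H.desc b c fb).right, ?_, ?_, ?_⟩
    · have h1 := congrArg (fun q => CommaMorphism.right q) (H.inl_desc b c fb)
      simp only [Under.comp_right] at h1
      exact h1
    · have h1 := congrArg (fun q => CommaMorphism.right q) (H.inr_desc b c fb)
      simp only [Under.comp_right] at h1
      exact h1
    · intro m hm1 hm2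
      have hWm : W.hom ≫ m = X.hom ≫ s.inl := by
        rw [← Under.w h, Category.assoc, hm1]
      have hmt : Under.homMk m hWm = H.desc b c fb := by
        refine H.hom_ext ?_ ?_
        · rw [H.inl_desc]
          ext
          simpa [b] using hm1
        · rw [H.inr_desc]
          ext
          simpa [c] using hm2
      exact congrArg (fun q => CommaMorphism.right q) hmt
  choose d hd1 hd2 hd3 using key
  have hc2 := IsPushout.of_isColimit (PushoutCocone.IsColimit.mk comm d hd1 hd2
    (fun s m hm1 hm2 => hd3 s m hm1 hm2))
  exact hc2

lemma pullback_under {P X Y W : Under A} {fst : P ⟶ X} {snd : P ⟶ Y} {f : X ⟶ W} {g : Y ⟶ W}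
    (H : IsPullback fst.right snd.right f.right g.right) : IsPullback fst snd f g := by
  have comm : fst ≫ f = snd ≫ g := by
    ext
    simpa using H.w
  have hl := IsPullback.of_isLimit (PullbackCone.IsLimit.mk comm
    (fun s => Under.homMk
      (H.lift s.fst.right s.snd.right (by
        have := congrArg (fun q => CommaMorphism.right q) s.condition
        simpa using this))
      (by
        refine H.hom_ext ?_ ?_
        · rw [Category.assoc, H.lift_fst, Under.w s.fst, ← Under.w fst]
        · rw [Category.assoc, H.lift_snd, Under.w s.snd, ← Under.w snd]))
    (fun s => by
      ext
      simp)
    (fun s => by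
      ext
      simp)
    (fun s m hm1 hm2 => by
      ext
      refine H.hom_ext ?_ ?_ <;> simp
      · have := congrArg (fun q => CommaMorphism.right q) hm1
        simpa using this
      · have := congrArg (fun q => CommaMorphism.right q) hm2
        simpa using this))
  exact hl

variable [HasFiniteLimits C]

lemma pullback_forget {P X Y W : Under A} {fst : P ⟶ X} {snd : P ⟶ Y} {f : X ⟶ W} {g : Y ⟶ W}
    (H : IsPullback fst snd f g) : IsPullback fst.right snd.right f.right g.right := by
  have hwc : X.hom ≫ f.right = Y.hom ≫ g.right := by rw [Under.w f, Under.w g]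
  let Q : Under A := Under.mk (pullback.lift X.hom Y.hom hwc)
  let p1 : Q ⟶ X := Under.homMk (pullback.fst f.right g.right) (pullback.lift_fst _ _ _)
  let p2 : Q ⟶ Y := Under.homMk (pullback.snd f.right g.right) (pullback.lift_snd _ _ _)
  have HQC : IsPullback (pullback.fst f.right g.right) (pullback.snd f.right g.right)
      f.right g.right := IsPullback.of_hasPullback f.right g.right
  have HQ : IsPullback p1 p2 f g := pullback_under (by simpa [p1, p2] using HQC)
  let u : P ⟶ Q := HQ.lift fst snd H.w
  have hu1 : u ≫ p1 = fst := HQ.lift_fst _ _ _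
  have hu2 : u ≫ p2 = snd := HQ.lift_snd _ _ _
  let v : Q ⟶ P := H.lift p1 p2 HQ.w
  have hv1 : v ≫ fst = p1 := H.lift_fst _ _ _
  have hv2 : v ≫ snd = p2 := H.lift_snd _ _ _
  have huv : u ≫ v = 𝟙 P := by
    refine H.hom_ext ?_ ?_ <;> simp [Category.assoc, hv1, hv2, hu1, hu2]
  have hvu : v ≫ u = 𝟙 Q := by
    refine HQ.hom_ext ?_ ?_ <;> simp [Category.assoc, hu1, hu2, hv1, hv2]
  have huvr : u.right ≫ v.right = 𝟙 P.right := by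
    have := congrArg (fun q => CommaMorphism.right q) huv
    simpa using this
  have hvur : v.right ≫ u.right = 𝟙 Q.right := by
    have := congrArg (fun q => CommaMorphism.right q) hvu
    simpa using this
  let e1 : Q.right ≅ P.right := ⟨v.right, u.right, hvur, huvr⟩
  refine HQC.of_iso e1 (Iso.refl _) (Iso.refl _) (Iso.refl _) ?_ ?_ ?_ ?_
  · have := congrArg (fun q => CommaMorphism.right q) hv1
    simp only [Under.comp_right] at this
    simpa [e1, p1] using this.symm
  · have := congrArg (fun q => CommaMorphism.right q) hv2
    simp only [Under.comp_right] at this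
    simpa [e1, p2] using this.symm
  · simp
  · simp

end CosliceAux

namespace CosliceAux

variable {C : Type u} [Category.{v} C] [HasFiniteLimits C] {A : C}

lemma malcev_forget {Z X Y : Under A} {f : Z ⟶ X} {g : Z ⟶ Y}
    (H : IsMalcevSpan f g) : IsMalcevSpan f.right g.right := by
  obtain ⟨hjm, hml⟩ := H
  constructor
  · -- jointly monic
    intro T u v hu hv
    set pr : Z.right ⟶ X.right ⨯ Y.right := prod.lift f.right g.right with hpr
    have hcond : pullback.fst pr pr ≫ f.right = pullback.snd pr pr ≫ f.right := by
      have := pullback.condition (f := pr) (g := pr)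
      calc pullback.fst pr pr ≫ f.right
          = pullback.fst pr pr ≫ pr ≫ prod.fst := by
            exact congrArg (pullback.fst pr pr ≫ ·) (prod.lift_fst f.right g.right).symm
        _ = pullback.snd pr pr ≫ pr ≫ prod.fst := by rw [← Category.assoc, this, Category.assoc]
        _ = pullback.snd pr pr ≫ f.right := by
            exact congrArg (pullback.snd pr pr ≫ ·) (prod.lift_fst f.right g.right)
    have hcond' : pullback.fst pr pr ≫ g.right = pullback.snd pr pr ≫ g.right := by
      have := pullback.condition (f := pr) (g := pr)
      calc pullback.fst pr pr ≫ g.right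
          = pullback.fst pr pr ≫ pr ≫ prod.snd := by
            exact congrArg (pullback.fst pr pr ≫ ·) (prod.lift_snd f.right g.right).symm
        _ = pullback.snd pr pr ≫ pr ≫ prod.snd := by rw [← Category.assoc, this, Category.assoc]
        _ = pullback.snd pr pr ≫ g.right := by
            exact congrArg (pullback.snd pr pr ≫ ·) (prod.lift_snd f.right g.right)
    let E : Under A := Under.mk (pullback.lift Z.hom Z.hom rfl : A ⟶ pullback pr pr)
    let e₁ : E ⟶ Z := Under.homMk (pullback.fst pr pr) (pullback.lift_fst _ _ _)
    let e₂ : E ⟶ Z := Under.homMk (pullback.snd pr pr) (pullback.lift_snd _ _ _)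
    have he : e₁ = e₂ := by
      refine hjm e₁ e₂ ?_ ?_
      · ext; simpa [e₁, e₂] using hcond
      · ext; simpa [e₁, e₂] using hcond'
    have he' : pullback.fst pr pr = pullback.snd pr pr := by
      have := congrArg (fun q => CommaMorphism.right q) he
      simpa [e₁, e₂] using this
    have hw : u ≫ pr = v ≫ pr := by
      apply Limits.prod.hom_ext <;> simp [hpr, hu, hv]
    calc u = pullback.lift u v hw ≫ pullback.fst pr pr := by rw [pullback.lift_fst]
      _ = pullback.lift u v hw ≫ pullback.snd pr pr := by rw [he']
      _ = v := by rw [pullback.lift_snd]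
  · -- Mal'cev condition
    intro P π₁ π₂ π₃ hP
    obtain ⟨a, ⟨ha1, ha2, ha3⟩, hau⟩ := hP.lift Z.hom Z.hom Z.hom rfl rfl
    let Pt : Under A := Under.mk (a : A ⟶ P)
    let pt1 : Pt ⟶ Z := Under.homMk π₁ ha1
    let pt2 : Pt ⟶ Z := Under.homMk π₂ ha2
    let pt3 : Pt ⟶ Z := Under.homMk π₃ ha3
    have hPt : IsTripleLimit f g pt1 pt2 pt3 := by
      refine ⟨?_, ?_, ?_⟩
      · ext; simpa [pt1, pt2] using hP.w₁
      · ext; simpa [pt2, pt3] using hP.w₂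
      · intro T x₁ x₂ x₃ h1 h2
        obtain ⟨w, ⟨hw1, hw2, hw3⟩, hwu⟩ := hP.lift x₁.right x₂.right x₃.right
          (by have := congrArg (fun q => CommaMorphism.right q) h1; simpa using this)
          (by have := congrArg (fun q => CommaMorphism.right q) h2; simpa using this)
        have hTw : T.hom ≫ w = a := by
          refine hau (T.hom ≫ w) ⟨?_, ?_, ?_⟩
          · rw [Category.assoc, hw1, Under.w x₁]
          · rw [Category.assoc, hw2, Under.w x₂]
          · rw [Category.assoc, hw3, Under.w x₃]
        refine ⟨Under.homMk w hTw, ⟨?_, ?_, ?_⟩, ?_⟩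
        · ext; simpa [pt1] using hw1
        · ext; simpa [pt2] using hw2
        · ext; simpa [pt3] using hw3
        · intro y ⟨hy1, hy2, hy3⟩
          ext
          refine hwu y.right ⟨?_, ?_, ?_⟩
          · have := congrArg (fun q => CommaMorphism.right q) hy1
            simpa [pt1] using this
          · have := congrArg (fun q => CommaMorphism.right q) hy2
            simpa [pt2] using this
          · have := congrArg (fun q => CommaMorphism.right q) hy3
            simpa [pt3] using this
    obtain ⟨p, hp1, hp2⟩ := hml pt1 pt2 pt3 hPt
    refine ⟨p.right, ?_, ?_⟩
    · have := congrArg (fun q => CommaMorphism.right q) hp1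
      simpa [pt1] using this
    · have := congrArg (fun q => CommaMorphism.right q) hp2
      simpa [pt3] using this

end CosliceAux

/-- If `C` is a (finitely complete) diexact category, then for every
object `A` the coslice category `A/C` is (finitely complete and) diexact. -/
theorem coslice_diexact {C : Type u} [Category.{v} C] [HasFiniteLimits C]
    (hC : Diexact C) (A : C) :
    HasFiniteLimits (Under A) ∧ Diexact (Under A) := by
  have hfl : HasFiniteLimits (Under A) :=
    ⟨fun J _ _ => by
      haveI : HasLimitsOfShape J C := HasFiniteLimits.out J
      exact StructuredArrow.hasLimitsOfShape⟩
  refine ⟨hfl, ?_⟩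
  intro Z X Y f g hM
  have hM' : IsMalcevSpan f.right g.right := CosliceAux.malcev_forget hM
  obtain ⟨hEx, hProp⟩ := hC f.right g.right hM'
  constructor
  · obtain ⟨D₀, h₀, k₀, hpo⟩ := hEx
    have hk : Y.hom ≫ k₀ = X.hom ≫ h₀ := by
      rw [← Under.w g, ← Under.w f, Category.assoc, Category.assoc, hpo.w]
    exact ⟨Under.mk (X.hom ≫ h₀), Under.homMk h₀ rfl, Under.homMk k₀ hk,
      CosliceAux.pushout_under (by simpa using hpo)⟩
  · intro W h k hpo
    have hpo' := CosliceAux.pushout_forget hpo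
    obtain ⟨hstab, hpb⟩ := hProp h.right k.right hpo'
    constructor
    · intro Z' X' Y' W' f' g' h' k' αZ αX αY αW p1 p2 p3 p4 pc
      apply CosliceAux.pushout_under
      refine hstab f'.right g'.right h'.right k'.right αZ.right αX.right αY.right αW.right
        (CosliceAux.pullback_forget p1) (CosliceAux.pullback_forget p2)
        (CosliceAux.pullback_forget p3) (CosliceAux.pullback_forget p4) ?_
      have := congrArg (fun q => CommaMorphism.right q) pc
      simpa using this
    · exact CosliceAux.pullback_under hpb
end

section
/- A finitely complete category C is diexact if and only if: (a) every span arising as the pullback of a cospan admits a pushout which is stable under pullback, and (b) every Mal'cev span in C is a pullback span, i.e. arises as the pullback of some cospan. -/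
open CategoryTheory CategoryTheory.Limits

universe v u

variable {C : Type u} [Category.{v} C]

/-- If `(f,g)` is a pullback of `(h ≫ m, k ≫ m)` and `f ≫ h = g ≫ k`, then it is a
pullback of `(h, k)`. -/
lemma isPullback_of_comp {Z A B D X : C} {f : Z ⟶ A} {g : Z ⟶ B} {h : A ⟶ D} {k : B ⟶ D}
    {m : D ⟶ X} (comm : f ≫ h = g ≫ k) (big : IsPullback f g (h ≫ m) (k ≫ m)) :
    IsPullback f g h k := by
  refine IsPullback.of_isLimit' ⟨comm⟩ (PullbackCone.IsLimit.mk _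
    (fun s => big.lift s.fst s.snd (by rw [← Category.assoc, s.condition, Category.assoc]))
    (fun s => big.lift_fst _ _ _) (fun s => big.lift_snd _ _ _) ?_)
  intro s w hw1 hw2
  apply big.hom_ext <;> simp [hw1, hw2]

lemma isMalcev_of_isPullback {Z A B D : C} {f : Z ⟶ A} {g : Z ⟶ B} {h : A ⟶ D} {k : B ⟶ D}
    (hpb : IsPullback f g h k) : IsMalcevSpan f g := by
  constructor
  · intro X u v hf hg
    exact hpb.hom_ext hf hg
  · intro P π₁ π₂ π₃ ht
    have w : (π₁ ≫ f) ≫ h = (π₃ ≫ g) ≫ k := by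
      rw [Category.assoc, Category.assoc, hpb.w, ← Category.assoc, ht.w₁, Category.assoc,
        ← hpb.w, ← Category.assoc, ht.w₂, Category.assoc, hpb.w]
    exact ⟨hpb.lift (π₁ ≫ f) (π₃ ≫ g) w, hpb.lift_fst _ _ _, hpb.lift_snd _ _ _⟩
/-- A finitely complete category is diexact if and only if (a) every
span arising as the pullback of a cospan admits a pushout which is stable under pullback,
and (b) every Mal'cev span is a pullback span. -/
theorem diexact_iff_stable_pushouts_of_pullbacks {C : Type u} [Category.{v} C]
    [HasFiniteLimits C] :
    Diexact C ↔
      ((∀ ⦃Z A B D : C⦄ (f : Z ⟶ A) (g : Z ⟶ B) (h : A ⟶ D) (k : B ⟶ D),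
          IsPullback f g h k →
          ∃ (P : C) (p : A ⟶ P) (q : B ⟶ P), IsPushout f g p q ∧ PushoutStable f g p q) ∧
       (∀ ⦃Z A B : C⦄ (f : Z ⟶ A) (g : Z ⟶ B), IsMalcevSpan f g →
          ∃ (D : C) (h : A ⟶ D) (k : B ⟶ D), IsPullback f g h k)) := by
  constructor
  · intro hd
    constructor
    · intro Z A B D f g h k hpb
      obtain ⟨⟨D', h', k', hpo⟩, hall⟩ := hd f g (isMalcev_of_isPullback hpb)
      exact ⟨D', h', k', hpo, (hall h' k' hpo).1⟩
    · intro Z A B f g hmal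
      obtain ⟨⟨D', h', k', hpo⟩, hall⟩ := hd f g hmal
      exact ⟨D', h', k', (hall h' k' hpo).2⟩
  · rintro ⟨ha, hb⟩ Z A B f g hmal
    obtain ⟨D₀, h₀, k₀, hpb₀⟩ := hb f g hmal
    obtain ⟨P, p, q, hpo, hstab⟩ := ha f g h₀ k₀ hpb₀
    refine ⟨⟨P, p, q, hpo⟩, ?_⟩
    intro D h k hpo'
    -- the comparison iso between the two pushouts
    let eh : P ⟶ D := hpo.desc h k hpo'.w
    let ei : D ⟶ P := hpo'.desc p q hpo.w
    have hei : ei ≫ eh = 𝟙 D := by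
      apply hpo'.hom_ext <;> simp [eh, ei, hpo.inl_desc, hpo.inr_desc, hpo'.inl_desc,
        hpo'.inr_desc, hpo.inl_desc_assoc, hpo.inr_desc_assoc, hpo'.inl_desc_assoc,
        hpo'.inr_desc_assoc]
    have heh : eh ≫ ei = 𝟙 P := by
      apply hpo.hom_ext <;> simp [eh, ei, hpo.inl_desc_assoc, hpo.inr_desc_assoc,
        hpo'.inl_desc, hpo'.inr_desc]
    let e : P ≅ D := ⟨eh, ei, heh, hei⟩
    have hpe : p ≫ e.hom = h := hpo.inl_desc _ _ _
    have hqe : q ≫ e.hom = k := hpo.inr_desc _ _ _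
    have hpi : h ≫ ei = p := by
      rw [← hpe]
      show (p ≫ eh) ≫ ei = p
      rw [Category.assoc, heh, Category.comp_id]
    have hqi : k ≫ ei = q := by
      rw [← hqe]
      show (q ≫ eh) ≫ ei = q
      rw [Category.assoc, heh, Category.comp_id]
    constructor
    · -- pushout stability
      intro Z' A' B' D' f' g' h' k' αZ αA αB αD pbf pbg pbh pbk comm
      refine hstab f' g' h' k' αZ αA αB (αD ≫ e.inv) pbf pbg ?_ ?_ comm
      · exact pbh.of_iso (Iso.refl _) (Iso.refl _) (Iso.refl _) e.symm (by simp) (by simp)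
          (by simp) (by simp [e, hpi])
      · exact pbk.of_iso (Iso.refl _) (Iso.refl _) (Iso.refl _) e.symm (by simp) (by simp)
          (by simp) (by simp [e, hqi])
    · -- the pushout square is a pullback
      let m : D ⟶ D₀ := hpo'.desc h₀ k₀ hpb₀.w
      have hm : h ≫ m = h₀ := hpo'.inl_desc _ _ _
      have km : k ≫ m = k₀ := hpo'.inr_desc _ _ _
      exact isPullback_of_comp hpo'.w (by rwa [hm, km])
end
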